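/- arXiv:0811.3048 — 11 statements merged into one kernel-verified Lean document; each statement's English description precedes it below -/
import Mathlib

section
/- Let η and δ be real numbers with 0 ≤ η ≤ δ ≤ 1/2 and δ > 0. Set γ = (1+2η)/(2(δ+η)), Δτ = 2δγ, and take balance parameter b = 3/2. Define B = γ + (b−1)(γ−1) and D = Δτ + (b−1)(Δτ−1). Then D ≥ 1/4 and B/D ≤ 3/(2δ). -/
/-- Case I (δ ≥ η, small Biot number) of Lemma 1:
with γ = (1+2η)/(2(δ+η)), Δτ = 2δγ, b = 3/2, B = γ+(b−1)(γ−1), D = Δτ+(b−1)(Δτ−1),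
one has D ≥ 1/4 and B/D ≤ 3/(2δ). -/
theorem stmt_0 (η δ γ Δτ b B D : ℝ)
    (hη0 : 0 ≤ η) (hηδ : η ≤ δ) (hδ2 : δ ≤ 1/2) (hδ0 : 0 < δ)
    (hγ : γ = (1 + 2*η) / (2*(δ + η)))
    (hΔτ : Δτ = 2*δ*γ)
    (hb : b = 3/2)
    (hB : B = γ + (b - 1)*(γ - 1))
    (hD : D = Δτ + (b - 1)*(Δτ - 1)) :
    1/4 ≤ D ∧ B / D ≤ 3/(2*δ) := by
  have hs : 0 < δ + η := by linarith
  subst hγ hΔτ hb hB hD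
  have key : (1 + 2*η) / (2*(δ + η)) * (2*(δ+η)) = 1 + 2*η := by field_simp
  have hD4 : (1:ℝ)/4 ≤ 2*δ*((1 + 2*η) / (2*(δ + η))) + (3/2 - 1)*(2*δ*((1 + 2*η) / (2*(δ + η))) - 1) := by
    nlinarith [key, mul_pos hδ0 hs, mul_nonneg hη0 hδ0.le, mul_nonneg (mul_nonneg hη0 hδ0.le) hδ0.le]
  refine ⟨hD4, ?_⟩
  rw [div_le_div_iff₀ (by linarith) (by positivity)]
  nlinarith [key, mul_pos hδ0 hs, sq_nonneg δ, mul_nonneg hη0 hδ0.le, mul_nonneg (mul_nonneg hη0 hδ0.le) hδ0.le]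
end

section
/- Let η and δ be real numbers with 0 < δ ≤ η ≤ 1/2. Set γ = (1+2η)/(2(δ+η)), Δτ = 2δγ, and take balance parameter b = 1 + δ/(2η). Define B = γ + (b−1)(γ−1) and D = Δτ + (b−1)(Δτ−1). Then D ≥ δ/(4η) and B/D ≤ 3/(2δ). -/
/-- Case II (0 < δ ≤ η ≤ 1/2) of Lemma 1:
with γ = (1+2η)/(2(δ+η)), Δτ = 2δγ, b = 1 + δ/(2η), B = γ+(b−1)(γ−1), D = Δτ+(b−1)(Δτ−1),
one has D ≥ δ/(4η) and B/D ≤ 3/(2δ). -/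
theorem stmt_1 (η δ γ Δτ b B D : ℝ)
    (hδ0 : 0 < δ) (hδη : δ ≤ η) (hη : η ≤ 1/2)
    (hγ : γ = (1 + 2*η) / (2*(δ + η)))
    (hΔτ : Δτ = 2*δ*γ)
    (hb : b = 1 + δ/(2*η))
    (hB : B = γ + (b - 1)*(γ - 1))
    (hD : D = Δτ + (b - 1)*(Δτ - 1)) :
    δ/(4*η) ≤ D ∧ B / D ≤ 3/(2*δ) := by
  have hη0 : 0 < η := lt_of_lt_of_le hδ0 hδη
  have hs : 0 < δ + η := by linarith
  subst hγ hΔτ hb hB hD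
  have hDval : (2*δ*((1 + 2*η) / (2*(δ + η))) + (1 + δ/(2*η) - 1)*(2*δ*((1 + 2*η) / (2*(δ + η))) - 1)) = δ*(1+4*η+2*δ)/(2*(δ+η)) := by
    field_simp
    ring
  rw [hDval]
  constructor
  · rw [div_le_div_iff₀ (by positivity) (by positivity)]
    nlinarith [sq_nonneg η, mul_pos hη0 hδ0]
  · have hDpos : 0 < δ*(1+4*η+2*δ)/(2*(δ+η)) := by positivity
    rw [div_le_div_iff₀ hDpos (by positivity)]
    have hBval : ((1 + 2*η) / (2*(δ + η)) + (1 + δ/(2*η) - 1)*((1 + 2*η) / (2*(δ + η)) - 1)) = ((1+2*η)*(2*η+δ) - 2*δ*(δ+η))/(4*η*(δ+η)) := by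
      field_simp
      ring
    rw [hBval, div_mul_eq_mul_div, ← mul_div_assoc, div_le_div_iff₀ (by positivity) (by positivity)]
    nlinarith [mul_pos hη0 hδ0, mul_pos hs hη0, sq_nonneg δ, mul_pos (mul_pos hη0 hδ0) hs, mul_pos (mul_pos hη0 hη0) hs, mul_nonneg (mul_nonneg hδ0.le hδ0.le) hs.le]
end

section
/- Let η and δ be real numbers with 0 < δ ≤ 1/2 ≤ η < ∞. Set γ = (1+2η)/(2(δ+η)), Δτ = 2δγ, and take balance parameter b = 1 + (1+2η)δ/(4η). Define B = γ + (b−1)(γ−1) and D = Δτ + (b−1)(Δτ−1). Then D ≥ (3/8)·((1+2η)/η)·δ and B/D ≤ 5/(6δ). -/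
/-- Case III (η ≥ 1/2) of Lemma 1:
with γ = (1+2η)/(2(δ+η)), Δτ = 2δγ, b = 1 + (1+2η)δ/(4η), B = γ+(b−1)(γ−1),
D = Δτ+(b−1)(Δτ−1), one has D ≥ (3/8)((1+2η)/η)δ and B/D ≤ 5/(6δ). -/
theorem stmt_2 (η δ γ Δτ b B D : ℝ)
    (hδ0 : 0 < δ) (hδ2 : δ ≤ 1/2) (hη : 1/2 ≤ η)
    (hγ : γ = (1 + 2*η) / (2*(δ + η)))
    (hΔτ : Δτ = 2*δ*γ)
    (hb : b = 1 + (1 + 2*η)*δ/(4*η))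
    (hB : B = γ + (b - 1)*(γ - 1))
    (hD : D = Δτ + (b - 1)*(Δτ - 1)) :
    3/8 * ((1 + 2*η)/η) * δ ≤ D ∧ B / D ≤ 5/(6*δ) := by
  have hη0 : 0 < η := lt_of_lt_of_le (by norm_num) hη
  have hde : 0 < δ + η := by linarith
  have hDval : D = δ*(1+2*η)*(3+2*δ)/(4*(δ+η)) := by
    rw [hD, hΔτ, hγ, hb]
    field_simp
    ring
  have hBval : B = (1+2*η)*(4*η+δ-2*δ^2)/(8*η*(δ+η)) := by
    rw [hB, hγ, hb]
    field_simp
    ring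
  have hDpos : 0 < D := by
    rw [hDval]
    positivity
  constructor
  · rw [hDval]
    rw [show (3:ℝ)/8*((1+2*η)/η)*δ = 3*δ*(1+2*η)/(8*η) by ring,
      div_le_div_iff₀ (by positivity) (by positivity)]
    have h1 : (0:ℝ) ≤ 12*η + 16*δ*η - 12*δ := by nlinarith
    nlinarith [mul_nonneg (mul_nonneg hδ0.le (by linarith : (0:ℝ) ≤ 1+2*η)) h1]
  · rw [div_le_div_iff₀ hDpos (by positivity : (0:ℝ) < 6*δ), hBval, hDval]
    rw [div_mul_eq_mul_div, ← mul_div_assoc,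
      div_le_div_iff₀ (by positivity) (by positivity)]
    have h2 : (0:ℝ) ≤ 24*η + 80*η*δ - 24*δ + 48*δ^2 := by nlinarith
    nlinarith [mul_nonneg (mul_nonneg (mul_nonneg hδ0.le
      (by linarith : (0:ℝ) ≤ 1+2*η)) hde.le) h2]
end

section
/- Let η and R be real numbers with 0 ≤ η ≤ 1/2 and R > 0. Set δ_s = 2·√(2/3)·R^(−1/2) and R_e = 3R (corresponding to balance parameter b_s = 3/2). If δ_c > 0 satisfies δ_c⁴ = 32·(δ_c + η)²/((1+2η)²·R_e), then δ_s ≤ δ_c. -/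
/-- Case I of Lemma 2: for 0 ≤ η ≤ 1/2 and R > 0, with δ_s = 2√(2/3)·R^(−1/2)
and R_e = 3R, if δ_c > 0 satisfies δ_c⁴ = 32(δ_c+η)²/((1+2η)²R_e), then δ_s ≤ δ_c. -/
theorem stmt_5 (η R δs Re δc : ℝ)
    (hη0 : 0 ≤ η) (hη : η ≤ 1/2) (hR : 0 < R)
    (hδs : δs = 2 * Real.sqrt (2/3) * R ^ (-(1:ℝ)/2))
    (hRe : Re = 3 * R)
    (hδc0 : 0 < δc)
    (hδc : δc ^ 4 = 32 * (δc + η)^2 / ((1 + 2*η)^2 * Re)) :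
    δs ≤ δc := by
  subst hRe
  -- square of δs
  set s := Real.sqrt (2/3) with hs
  have hs2 : s ^ 2 = 2/3 := Real.sq_sqrt (by norm_num)
  have hs0 : 0 ≤ s := Real.sqrt_nonneg _
  set r := R ^ (-(1:ℝ)/2) with hr
  have hr0 : 0 < r := Real.rpow_pos_of_pos hR _
  have hr2 : r ^ 2 = R⁻¹ := by
    rw [hr, ← Real.rpow_natCast (R ^ (-(1:ℝ)/2)) 2, ← Real.rpow_mul hR.le]
    norm_num
    rw [Real.rpow_neg_one]
  have hδs0 : 0 ≤ δs := by
    rw [hδs]; positivity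
  have hδssq : δs ^ 2 = 8 / (3 * R) := by
    rw [hδs]
    have : (2 * s * r) ^ 2 = 4 * s ^ 2 * r ^ 2 := by ring
    rw [this, hs2, hr2]
    field_simp
    ring
  -- denominator positive
  have hden : 0 < (1 + 2*η)^2 * (3 * R) := by positivity
  have hkey : δc ^ 4 * ((1 + 2*η)^2 * (3 * R)) = 32 * (δc + η)^2 := by
    rw [hδc, div_mul_cancel₀ _ hden.ne']
  -- δc + η ≥ δc (1+2η)/2
  have hineq : δc * (1 + 2*η) / 2 ≤ δc + η := by nlinarith [mul_nonneg hη0 (sub_nonneg.mpr hη)]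
  have h2 : δc ^ 2 * (1 + 2*η)^2 / 4 ≤ (δc + η)^2 := by
    nlinarith [mul_pos hδc0 (by nlinarith : (0:ℝ) < 1 + 2*η)]
  have hfin : δs ^ 2 ≤ δc ^ 2 := by
    rw [hδssq]
    have hp : (0:ℝ) < (1 + 2*η)^2 := by positivity
    rw [div_le_iff₀ (by positivity)]
    have hc2 : 0 < δc ^ 2 := by positivity
    have step : δc ^ 4 * (3 * R) * (1 + 2*η)^2 ≥ 8 * δc ^ 2 * (1 + 2*η)^2 := by nlinarith
    have step2 : δc ^ 4 * (3 * R) ≥ 8 * δc ^ 2 := le_of_mul_le_mul_right (by linarith) hp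
    nlinarith
  calc δs = Real.sqrt (δs ^ 2) := (Real.sqrt_sq hδs0).symm
    _ ≤ Real.sqrt (δc ^ 2) := Real.sqrt_le_sqrt hfin
    _ = δc := Real.sqrt_sq hδc0.le
end

section
/- Let η and R be real numbers with 0 < η ≤ 1/2 and R ≥ (8/3)·η^(−2). Set δ_s = 2·(η/3)^(1/3)·R^(−1/3), b_s = 1 + δ_s/(2η), and R_e = b_s·R/(b_s − 1). If δ_c > 0 satisfies δ_c⁴ = 32·(δ_c + η)²/((1+2η)²·R_e), then δ_s ≤ δ_c. -/
/-- Case II of Lemma 2: for 0 < η ≤ 1/2 and R ≥ (8/3)η⁻², with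
δ_s = 2(η/3)^(1/3)·R^(−1/3), b_s = 1 + δ_s/(2η) and R_e = b_s·R/(b_s−1),
if δ_c > 0 satisfies δ_c⁴ = 32(δ_c+η)²/((1+2η)²R_e), then δ_s ≤ δ_c. -/
theorem stmt_6 (η R δs bs Re δc : ℝ)
    (hη0 : 0 < η) (hη : η ≤ 1/2) (hR : 8/(3*η^2) ≤ R)
    (hδs : δs = 2 * (η/3) ^ ((1:ℝ)/3) * R ^ (-(1:ℝ)/3))
    (hbs : bs = 1 + δs/(2*η))
    (hRe : Re = bs * R / (bs - 1))
    (hδc0 : 0 < δc)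
    (hδc : δc ^ 4 = 32 * (δc + η)^2 / ((1 + 2*η)^2 * Re)) :
    δs ≤ δc := by
  have hR0 : 0 < R := lt_of_lt_of_le (by positivity) hR
  have hδs0 : 0 < δs := by
    rw [hδs]
    have h1 : (0:ℝ) < (η/3) ^ ((1:ℝ)/3) := Real.rpow_pos_of_pos (by positivity) _
    have h2 : (0:ℝ) < R ^ (-(1:ℝ)/3) := Real.rpow_pos_of_pos hR0 _
    positivity
  -- δs³ = 8η/(3R)
  have hc1 : ((η/3) ^ ((1:ℝ)/3)) ^ (3:ℕ) = η/3 := by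
    rw [← Real.rpow_natCast ((η/3) ^ ((1:ℝ)/3)) 3, ← Real.rpow_mul (by positivity)]
    norm_num
  have hc2 : (R ^ (-(1:ℝ)/3)) ^ (3:ℕ) = R⁻¹ := by
    rw [← Real.rpow_natCast (R ^ (-(1:ℝ)/3)) 3, ← Real.rpow_mul hR0.le]
    norm_num
    exact Real.rpow_neg_one R
  have hcube : δs ^ 3 = 8 * η / (3 * R) := by
    have h : δs ^ 3 = 2^3 * ((η/3) ^ ((1:ℝ)/3)) ^ (3:ℕ) * (R ^ (-(1:ℝ)/3)) ^ (3:ℕ) := by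
      rw [hδs]; ring
    rw [h, hc1, hc2]
    field_simp
    norm_num
  -- δs ≤ η
  have hcube_le : δs ^ 3 ≤ η ^ 3 := by
    rw [hcube, div_le_iff₀ (by positivity)]
    rw [div_le_iff₀ (by positivity)] at hR
    nlinarith [pow_pos hη0 3]
  have hδsη : δs ≤ η := le_of_pow_le_pow_left₀ (by norm_num) hη0.le hcube_le
  -- Re expression
  have hReval : Re = R * (2*η + δs) / δs := by
    rw [hRe, hbs]
    field_simp
    ring_nf; exact mul_inv_cancel₀ hδs0.ne'
  have hRe0 : 0 < Re := by rw [hReval]; positivity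
  have hA0 : 0 < (1 + 2*η)^2 * Re := by positivity
  -- key inequality for δs
  have hkey : δs ^ 4 * ((1 + 2*η)^2 * Re) ≤ 32 * (δs + η)^2 := by
    have h1 : δs ^ 4 * ((1 + 2*η)^2 * Re) = (δs ^ 3 * R) * (1 + 2*η)^2 * (2*η + δs) := by
      rw [hReval]; field_simp
    have h2 : δs ^ 3 * R = 8 * η / 3 := by
      rw [hcube]; field_simp
    rw [h1, h2]
    have s1 : (1 + 2*η)^2 ≤ 4 := by nlinarith
    have s2 : 2*η + δs ≤ 3*η := by linarith
    have s3 : (1 + 2*η)^2 * (2*η + δs) ≤ 4 * (3*η) :=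
      mul_le_mul s1 s2 (by linarith) (by norm_num)
    nlinarith [mul_le_mul_of_nonneg_left s3 (show (0:ℝ) ≤ 8*η/3 by positivity),
      sq_nonneg δs, mul_nonneg hδs0.le hη0.le]
  -- δc equation cleared of denominators
  have hAne : ((1 + 2*η)^2 * Re) ≠ 0 := ne_of_gt hA0
  have hδceq : δc ^ 4 * ((1 + 2*η)^2 * Re) = 32 * (δc + η)^2 := by
    rw [hδc]
    field_simp
  -- conclude by contradiction via monotonicity of δ⁴/(δ+η)²
  by_contra hlt
  push_neg at hlt
  have key : δc^2 * (δs + η) < δs^2 * (δc + η) := by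
    have hp := mul_pos (sub_pos.2 hlt) (show 0 < δc*δs + η*(δs + δc) by positivity)
    have hid : δs^2 * (δc + η) - δc^2 * (δs + η) = (δs - δc) * (δc*δs + η*(δs + δc)) := by
      ring
    linarith [hp, hid]
  have keysq : (δc^2 * (δs + η))^2 < (δs^2 * (δc + η))^2 :=
    pow_lt_pow_left₀ key (by positivity) two_ne_zero
  have h3 : δc^4 * (δs + η)^2 < δs^4 * (δc + η)^2 := by
    calc δc^4 * (δs + η)^2 = (δc^2 * (δs + η))^2 := by ring
    _ < (δs^2 * (δc + η))^2 := keysq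
    _ = δs^4 * (δc + η)^2 := by ring
  have e1 : δc^4 * (δs + η)^2 * ((1 + 2*η)^2 * Re) = 32 * (δc + η)^2 * (δs + η)^2 := by
    calc δc^4 * (δs + η)^2 * ((1 + 2*η)^2 * Re)
        = (δc^4 * ((1 + 2*η)^2 * Re)) * (δs + η)^2 := by ring
    _ = 32 * (δc + η)^2 * (δs + η)^2 := by rw [hδceq]
  have e2 : δs^4 * (δc + η)^2 * ((1 + 2*η)^2 * Re) ≤ 32 * (δs + η)^2 * (δc + η)^2 := by
    calc δs^4 * (δc + η)^2 * ((1 + 2*η)^2 * Re)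
        = (δs^4 * ((1 + 2*η)^2 * Re)) * (δc + η)^2 := by ring
    _ ≤ 32 * (δs + η)^2 * (δc + η)^2 :=
      mul_le_mul_of_nonneg_right hkey (sq_nonneg (δc + η))
  have contr : 32 * (δc + η)^2 * (δs + η)^2 < 32 * (δs + η)^2 * (δc + η)^2 := by
    calc 32 * (δc + η)^2 * (δs + η)^2
        = δc^4 * (δs + η)^2 * ((1 + 2*η)^2 * Re) := e1.symm
    _ < δs^4 * (δc + η)^2 * ((1 + 2*η)^2 * Re) := mul_lt_mul_of_pos_right h3 hA0
    _ ≤ 32 * (δs + η)^2 * (δc + η)^2 := e2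
  have hid2 : 32 * (δc + η)^2 * (δs + η)^2 = 32 * (δs + η)^2 * (δc + η)^2 := by ring
  linarith [contr, hid2]
end

section
/- Let η and R be real numbers with 1/2 ≤ η < ∞ and R > 0. Set δ_s = 2·(2/3)^(1/3)·(η/(1+2η))^(1/3)·R^(−1/3), b_s = 1 + (1+2η)·δ_s/(4η), and R_e = b_s·R/(b_s − 1), and assume δ_s ≤ 1/2. If δ_c > 0 satisfies δ_c⁴ = 32·(δ_c + η)²/((1+2η)²·R_e), then δ_s ≤ δ_c. -/
/-- Case III of Lemma 2: for 1/2 ≤ η < ∞ and R > 0, with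
δ_s = 2(2/3)^(1/3)·(η/(1+2η))^(1/3)·R^(−1/3), b_s = 1 + (1+2η)δ_s/(4η),
R_e = b_s·R/(b_s−1), and δ_s ≤ 1/2, if δ_c > 0 satisfies
δ_c⁴ = 32(δ_c+η)²/((1+2η)²R_e), then δ_s ≤ δ_c. -/
theorem stmt_7 (η R δs bs Re δc : ℝ)
    (hη : 1/2 ≤ η) (hR : 0 < R)
    (hδs : δs = 2 * (2/3 : ℝ) ^ ((1:ℝ)/3) * (η/(1 + 2*η)) ^ ((1:ℝ)/3) * R ^ (-(1:ℝ)/3))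
    (hbs : bs = 1 + (1 + 2*η) * δs / (4*η))
    (hRe : Re = bs * R / (bs - 1))
    (hδs2 : δs ≤ 1/2)
    (hδc0 : 0 < δc)
    (hδc : δc ^ 4 = 32 * (δc + η)^2 / ((1 + 2*η)^2 * Re)) :
    δs ≤ δc := by
  have hη0 : 0 < η := by linarith
  have h12η : 0 < 1 + 2*η := by linarith
  have hδs0 : 0 < δs := by
    rw [hδs]
    have h1 : (0:ℝ) < (2/3 : ℝ) ^ ((1:ℝ)/3) := Real.rpow_pos_of_pos (by norm_num) _
    have h2 : (0:ℝ) < (η/(1 + 2*η)) ^ ((1:ℝ)/3) := Real.rpow_pos_of_pos (by positivity) _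
    have h3 : (0:ℝ) < R ^ (-(1:ℝ)/3) := Real.rpow_pos_of_pos hR _
    positivity
  -- cube of δs
  have h23 : ((2/3:ℝ) ^ ((1:ℝ)/3))^(3:ℕ) = 2/3 := by
    rw [← Real.rpow_natCast ((2/3:ℝ)^((1:ℝ)/3)) 3, ← Real.rpow_mul (by norm_num)]
    norm_num
  have hE3 : ((η/(1 + 2*η)) ^ ((1:ℝ)/3))^(3:ℕ) = η/(1 + 2*η) := by
    rw [← Real.rpow_natCast _ 3, ← Real.rpow_mul (by positivity)]
    norm_num
  have hR3 : (R ^ (-(1:ℝ)/3))^(3:ℕ) = R⁻¹ := by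
    rw [← Real.rpow_natCast _ 3, ← Real.rpow_mul hR.le]
    norm_num [Real.rpow_neg_one]
  have hcube : R * δs^3 = 16*η/(3*(1 + 2*η)) := by
    have : δs^3 = 8 * (2/3) * (η/(1 + 2*η)) * R⁻¹ := by
      rw [hδs, mul_pow, mul_pow, mul_pow, h23, hE3, hR3]; ring
    rw [this]
    field_simp
    ring
  have hb1 : bs - 1 = (1 + 2*η)*δs/(4*η) := by rw [hbs]; ring
  have hb1pos : 0 < bs - 1 := by rw [hb1]; positivity
  have hbspos : 0 < bs := by linarith
  have hbsle : bs ≤ 3/2 := by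
    rw [hbs]
    have h : (1 + 2*η)*δs/(4*η) ≤ 1/2 := by
      rw [div_le_iff₀ (by positivity)]
      nlinarith
    linarith
  have hRepos : 0 < Re := by
    rw [hRe]; positivity
  -- key equality for δs
  have hReb : Re * (bs - 1) = bs * R := by
    rw [hRe]; field_simp
  have hkeyeq : δs^4 * ((1 + 2*η)^2 * Re) = 64*η^2*bs/3 := by
    have h4 : (δs^4 * ((1 + 2*η)^2 * Re)) * (bs - 1) = (64*η^2*bs/3) * (bs - 1) := by
      have e1 : (δs^4 * ((1 + 2*η)^2 * Re)) * (bs - 1)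
          = δs * (1 + 2*η)^2 * bs * (R * δs^3) := by
        linear_combination δs^4*(1 + 2*η)^2 * hReb
      rw [e1, hcube, hb1]
      field_simp
      ring
    exact mul_right_cancel₀ (ne_of_gt hb1pos) h4
  have hkey : δs^4 * ((1 + 2*η)^2 * Re) ≤ 32*(δs + η)^2 := by
    rw [hkeyeq]
    have h1 : η^2*bs ≤ η^2*(3/2) := mul_le_mul_of_nonneg_left hbsle (sq_nonneg η)
    have h2 : 32*(δs + η)^2 = 32*η^2 + 64*(δs*η) + 32*δs^2 := by ring
    have h3 : 0 ≤ δs*η := (mul_pos hδs0 hη0).le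
    have h4 : 0 ≤ δs^2 := sq_nonneg δs
    have h5 : 64*η^2*bs/3 = (64/3)*(η^2*bs) := by ring
    linarith
  -- equality for δc
  have hKpos : 0 < (1 + 2*η)^2 * Re := by positivity
  have hδceq : δc^4 * ((1 + 2*η)^2 * Re) = 32*(δc + η)^2 := by
    rw [hδc]
    field_simp
  by_contra hcon
  push_neg at hcon
  -- hcon : δc < δs
  have hδc4 : (0:ℝ) < δc^4 := by positivity
  have h5 : δs^4 * (32*(δc + η)^2) ≤ δc^4 * (32*(δs + η)^2) := by
    calc δs^4 * (32*(δc + η)^2) = δs^4 * (δc^4 * ((1 + 2*η)^2 * Re)) := by rw [hδceq]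
    _ = δc^4 * (δs^4 * ((1 + 2*η)^2 * Re)) := by ring
    _ ≤ δc^4 * (32*(δs + η)^2) := by
        exact mul_le_mul_of_nonneg_left hkey hδc4.le
  -- contradiction: for 0 < δc < δs, δs²(δc+η) > δc²(δs+η) > 0
  have hA : 0 < δc^2 * (δs + η) := by positivity
  have hB : δc^2 * (δs + η) < δs^2 * (δc + η) := by
    have h1 : 0 < δc*δs*(δs-δc) := mul_pos (mul_pos hδc0 hδs0) (sub_pos.mpr hcon)
    have h2 : 0 < η*(δs+δc)*(δs-δc) :=
      mul_pos (mul_pos hη0 (by linarith)) (sub_pos.mpr hcon)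
    have h3 : δs^2*(δc+η) - δc^2*(δs+η) = δc*δs*(δs-δc) + η*(δs+δc)*(δs-δc) := by ring
    linarith
  have hsq : (δc^2*(δs+η)) * (δc^2*(δs+η)) < (δs^2*(δc+η)) * (δs^2*(δc+η)) :=
    mul_lt_mul' hB.le hB hA.le (hA.trans hB)
  have e1 : (δs^2*(δc+η))*(δs^2*(δc+η))*32 = δs^4 * (32*(δc + η)^2) := by ring
  have e2 : (δc^2*(δs+η))*(δc^2*(δs+η))*32 = δc^4 * (32*(δs + η)^2) := by ring
  linarith
end

section
/- Let δ, γ, R_e, k be real numbers with 0 < δ ≤ 1/2, γ > 0, R_e > 0, k > 0, and suppose γ²·δ⁴ ≤ 8/R_e. Define σ : [0,1] → ℝ by σ(z) = −γ for z ∈ [0,δ] ∪ [1−δ, 1] and σ(z) = 0 otherwise. Then for all complex-valued functions w, θ on [0,1] with w twice continuously differentiable, θ continuously differentiable, and w(0) = w(1) = 0, w'(0) = w'(1) = 0, one has ∫₀¹ [ (1/R_e)·( k²·|w(z)|² + 2·|w'(z)|² + (1/k²)·|w''(z)|² ) + 2·σ(z)·Re( w(z)·conj(θ(z)) ) + k²·|θ(z)|²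 + |θ'(z)|² ] dz ≥ 0. -/
open MeasureTheory Set intervalIntegral

lemma integral_sqrt' (z : ℝ) (hz : 0 ≤ z) :
    ∫ x in (0:ℝ)..z, Real.sqrt x = 2/3 * (z * Real.sqrt z) := by
  have h := intervalIntegral.integral_eq_sub_of_hasDeriv_right_of_le hz
    (f := fun x => 2/3 * (x * Real.sqrt x)) (f' := fun x => Real.sqrt x)
    (by fun_prop) ?_ (Real.continuous_sqrt.intervalIntegrable 0 z)
  · rw [h]; simp
  · intro x hx
    have hx0 : 0 < x := hx.1
    have hsx : 0 < Real.sqrt x := Real.sqrt_pos.2 hx0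
    have h1 : HasDerivAt (fun x : ℝ => x * Real.sqrt x)
        (1 * Real.sqrt x + x * (1 / (2 * Real.sqrt x))) x :=
      (hasDerivAt_id x).mul (Real.hasDerivAt_sqrt hx0.ne')
    have h2 := h1.const_mul (2/3 : ℝ)
    have e : 2/3 * (1 * Real.sqrt x + x * (1 / (2 * Real.sqrt x))) = Real.sqrt x := by
      have hxx : Real.sqrt x * Real.sqrt x = x := Real.mul_self_sqrt hx0.le
      field_simp
      nlinarith [hxx]
    rw [e] at h2
    exact h2.hasDerivWithinAt

lemma cs_set {s : Set ℝ} (hs : MeasurableSet s) (hfin : volume s ≠ ⊤) (f g : ℝ → ℝ)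
    (hf0 : ∀ x, 0 ≤ f x) (hg0 : ∀ x, 0 ≤ g x)
    (hfm : AEStronglyMeasurable f (volume.restrict s))
    (hgm : AEStronglyMeasurable g (volume.restrict s))
    (Cf Cg : ℝ) (hfb : ∀ x ∈ s, f x ≤ Cf) (hgb : ∀ x ∈ s, g x ≤ Cg) :
    ∫ x in s, f x * g x ≤ Real.sqrt (∫ x in s, f x ^ 2) * Real.sqrt (∫ x in s, g x ^ 2) := by
  haveI : IsFiniteMeasure (volume.restrict s) := ⟨by simpa using hfin.lt_top⟩
  have hpq : Real.HolderConjugate 2 2 := Real.holderConjugate_iff.2 ⟨by norm_num, by norm_num⟩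
  have hf2 : MemLp f (ENNReal.ofReal 2) (volume.restrict s) := by
    rw [show ENNReal.ofReal 2 = 2 by norm_num]
    exact MemLp.of_bound hfm Cf (((ae_restrict_mem hs).mono fun x hx => by
      rw [Real.norm_of_nonneg (hf0 x)]; exact hfb x hx))
  have hg2 : MemLp g (ENNReal.ofReal 2) (volume.restrict s) := by
    rw [show ENNReal.ofReal 2 = 2 by norm_num]
    exact MemLp.of_bound hgm Cg (((ae_restrict_mem hs).mono fun x hx => by
      rw [Real.norm_of_nonneg (hg0 x)]; exact hgb x hx))
  have h := integral_mul_le_Lp_mul_Lq_of_nonneg hpq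
    (Filter.Eventually.of_forall hf0) (Filter.Eventually.of_forall hg0) hf2 hg2
  have e1 : ∫ x in s, f x ^ (2:ℝ) = ∫ x in s, f x ^ 2 := by
    congr 1; ext x; rw [show (2:ℝ) = ((2:ℕ):ℝ) by norm_num, Real.rpow_natCast]
  have e2 : ∫ x in s, g x ^ (2:ℝ) = ∫ x in s, g x ^ 2 := by
    congr 1; ext x; rw [show (2:ℝ) = ((2:ℕ):ℝ) by norm_num, Real.rpow_natCast]
  rw [e1, e2] at h
  calc ∫ x in s, f x * g x
      ≤ (∫ x in s, f x ^ 2) ^ ((1:ℝ)/2) * (∫ x in s, g x ^ 2) ^ ((1:ℝ)/2) := h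
    _ = Real.sqrt (∫ x in s, f x ^ 2) * Real.sqrt (∫ x in s, g x ^ 2) := by
        rw [Real.sqrt_eq_rpow, Real.sqrt_eq_rpow]

lemma refl_integral (F : ℝ → ℝ) (δ : ℝ) (hδ : 0 ≤ δ) (hδ1 : δ ≤ 1) :
    ∫ z in Ioc (0:ℝ) δ, F (1-z) = ∫ z in Icc (1-δ) 1, F z := by
  rw [← intervalIntegral.integral_of_le hδ]
  rw [intervalIntegral.integral_comp_sub_left F 1]
  rw [show (1:ℝ) - 0 = 1 by norm_num]
  rw [intervalIntegral.integral_of_le (by linarith)]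
  rw [integral_Icc_eq_integral_Ioc]
lemma young_aux (P Q C a b : ℝ) (hP : 0 < P) (hQ : 0 < Q) (hC : 0 ≤ C)
    (ha : 0 ≤ a) (hb : 0 ≤ b) (h : C^2 ≤ 4*(P*Q)) : C*(a*b) ≤ P*a^2 + Q*b^2 := by
  have hsq : Real.sqrt (P*Q) = Real.sqrt P * Real.sqrt Q := Real.sqrt_mul hP.le Q
  have h2 : 2 * (Real.sqrt (P*Q) * (a*b)) ≤ P*a^2 + Q*b^2 := by
    have := two_mul_le_add_sq (Real.sqrt P * a) (Real.sqrt Q * b)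
    have e1 : (Real.sqrt P * a)^2 = P * a^2 := by
      rw [mul_pow, Real.sq_sqrt hP.le]
    have e2 : (Real.sqrt Q * b)^2 = Q * b^2 := by
      rw [mul_pow, Real.sq_sqrt hQ.le]
    calc 2 * (Real.sqrt (P*Q) * (a*b)) = 2 * (Real.sqrt P * a) * (Real.sqrt Q * b) := by
          rw [hsq]; ring
      _ ≤ (Real.sqrt P * a)^2 + (Real.sqrt Q * b)^2 := this
      _ = P*a^2 + Q*b^2 := by rw [e1, e2]
  have hCle : C ≤ 2 * Real.sqrt (P*Q) := by
    have h4 : Real.sqrt (4*(P*Q)) = 2 * Real.sqrt (P*Q) := by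
      rw [Real.sqrt_mul (by norm_num : (0:ℝ) ≤ 4),
        show (4:ℝ) = 2^2 by norm_num, Real.sqrt_sq (by norm_num : (0:ℝ) ≤ 2)]
    calc C = Real.sqrt (C^2) := (Real.sqrt_sq hC).symm
      _ ≤ Real.sqrt (4*(P*Q)) := Real.sqrt_le_sqrt h
      _ = 2 * Real.sqrt (P*Q) := h4
  calc C*(a*b) ≤ (2*Real.sqrt (P*Q))*(a*b) :=
        mul_le_mul_of_nonneg_right hCle (mul_nonneg ha hb)
    _ = 2 * (Real.sqrt (P*Q) * (a*b)) := by ring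
    _ ≤ P*a^2 + Q*b^2 := h2

lemma layer_bound (δ : ℝ) (hδ0 : 0 < δ) (hδ1 : δ ≤ 1)
    (w w' w'' θ : ℝ → ℂ)
    (hw : ∀ z ∈ Icc (0:ℝ) 1, HasDerivWithinAt w (w' z) (Icc 0 1) z)
    (hw' : ∀ z ∈ Icc (0:ℝ) 1, HasDerivWithinAt w' (w'' z) (Icc 0 1) z)
    (hw''c : ContinuousOn w'' (Icc 0 1))
    (hθc : ContinuousOn θ (Icc 0 1))
    (hw0 : w 0 = 0) (hw'0 : w' 0 = 0) :
    ∫ z in Ioc (0:ℝ) δ, ‖w z‖ * ‖θ z‖ ≤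
      (δ^2/3) * (Real.sqrt (∫ z in Ioc (0:ℝ) δ, ‖w'' z‖^2)
        * Real.sqrt (∫ z in Ioc (0:ℝ) δ, ‖θ z‖^2)) := by
  set L := Real.sqrt (∫ z in Ioc (0:ℝ) δ, ‖w'' z‖^2) with hL
  set M := Real.sqrt (∫ z in Ioc (0:ℝ) δ, ‖θ z‖^2) with hM
  have hL0 : 0 ≤ L := Real.sqrt_nonneg _
  have hIcc01 : Icc (0:ℝ) δ ⊆ Icc 0 1 := Icc_subset_Icc le_rfl hδ1
  have hwc : ContinuousOn w (Icc (0:ℝ) 1) := fun z hz => (hw z hz).continuousWithinAt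
  have hw'c : ContinuousOn w' (Icc (0:ℝ) 1) := fun z hz => (hw' z hz).continuousWithinAt
  obtain ⟨Cw'', hCw''⟩ := isCompact_Icc.exists_bound_of_continuousOn hw''c
  obtain ⟨Cθ, hCθ⟩ := isCompact_Icc.exists_bound_of_continuousOn hθc
  have hw''sq : IntegrableOn (fun z => ‖w'' z‖^2) (Ioc 0 δ) volume :=
    (((hw''c.mono hIcc01).norm.pow 2).integrableOn_Icc).mono_set Ioc_subset_Icc_self
  -- Step A : pointwise bound on ‖w'‖
  have stepA : ∀ s ∈ Icc (0:ℝ) δ, ‖w' s‖ ≤ Real.sqrt s * L := by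
    intro s hs
    have hs1 : s ≤ 1 := le_trans hs.2 hδ1
    have hftc : ∫ t in (0:ℝ)..s, w'' t = w' s - w' 0 := by
      apply intervalIntegral.integral_eq_sub_of_hasDeriv_right_of_le hs.1
        (hw'c.mono (Icc_subset_Icc le_rfl hs1))
      · intro x hx
        have hx01 : Icc (0:ℝ) 1 ∈ nhds x :=
          Icc_mem_nhds hx.1 (lt_of_lt_of_le hx.2 hs1)
        exact (((hw' x ⟨hx.1.le, le_trans hx.2.le hs1⟩).hasDerivAt hx01)).hasDerivWithinAt
      · exact (hw''c.mono (Icc_subset_Icc le_rfl hs1)).intervalIntegrable_of_Icc hs.1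
    have h1 : ‖w' s‖ ≤ ∫ t in (0:ℝ)..s, ‖w'' t‖ := by
      rw [show w' s = ∫ t in (0:ℝ)..s, w'' t by rw [hftc, hw'0, sub_zero]]
      exact intervalIntegral.norm_integral_le_integral_norm hs.1
    have hsub : Ioc (0:ℝ) s ⊆ Icc 0 1 := fun t ht => ⟨ht.1.le, le_trans ht.2 hs1⟩
    have h2 : ∫ t in (0:ℝ)..s, ‖w'' t‖ ≤ Real.sqrt (∫ t in Ioc (0:ℝ) s, ‖w'' t‖^2)
        * Real.sqrt s := by
      rw [intervalIntegral.integral_of_le hs.1]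
      have hcs := cs_set (measurableSet_Ioc (a := (0:ℝ)) (b := s)) (by simp)
        (fun t => ‖w'' t‖) (fun _ => (1:ℝ))
        (fun t => norm_nonneg _) (fun _ => zero_le_one)
        (((hw''c.mono hsub).norm).aestronglyMeasurable measurableSet_Ioc)
        aestronglyMeasurable_const Cw'' 1
        (fun t ht => hCw'' t (hsub ht)) (fun _ _ => le_rfl)
      simp only [mul_one, one_pow] at hcs
      have hvol : ∫ (_ : ℝ) in Ioc (0:ℝ) s, (1:ℝ) = s := by
        simp [Real.volume_Ioc, hs.1]
      rw [hvol] at hcs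
      exact hcs
    have h3 : Real.sqrt (∫ t in Ioc (0:ℝ) s, ‖w'' t‖^2) ≤ L := by
      apply Real.sqrt_le_sqrt
      apply setIntegral_mono_set hw''sq
        (Filter.Eventually.of_forall fun t => sq_nonneg _)
        (HasSubset.Subset.eventuallyLE (Ioc_subset_Ioc le_rfl hs.2))
    calc ‖w' s‖ ≤ ∫ t in (0:ℝ)..s, ‖w'' t‖ := h1
      _ ≤ Real.sqrt (∫ t in Ioc (0:ℝ) s, ‖w'' t‖^2) * Real.sqrt s := h2
      _ ≤ L * Real.sqrt s := mul_le_mul_of_nonneg_right h3 (Real.sqrt_nonneg _)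
      _ = Real.sqrt s * L := mul_comm _ _
  -- Step B : pointwise bound on ‖w‖
  have stepB : ∀ z ∈ Icc (0:ℝ) δ, ‖w z‖ ≤ 2/3 * (z * Real.sqrt z) * L := by
    intro z hz
    have hz1 : z ≤ 1 := le_trans hz.2 hδ1
    have hftc : ∫ t in (0:ℝ)..z, w' t = w z - w 0 := by
      apply intervalIntegral.integral_eq_sub_of_hasDeriv_right_of_le hz.1
        (hwc.mono (Icc_subset_Icc le_rfl hz1))
      · intro x hx
        have hx01 : Icc (0:ℝ) 1 ∈ nhds x :=
          Icc_mem_nhds hx.1 (lt_of_lt_of_le hx.2 hz1)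
        exact (((hw x ⟨hx.1.le, le_trans hx.2.le hz1⟩).hasDerivAt hx01)).hasDerivWithinAt
      · exact (hw'c.mono (Icc_subset_Icc le_rfl hz1)).intervalIntegrable_of_Icc hz.1
    have h1 : ‖w z‖ ≤ ∫ t in (0:ℝ)..z, ‖w' t‖ := by
      rw [show w z = ∫ t in (0:ℝ)..z, w' t by rw [hftc, hw0, sub_zero]]
      exact intervalIntegral.norm_integral_le_integral_norm hz.1
    have h2 : ∫ t in (0:ℝ)..z, ‖w' t‖ ≤ ∫ t in (0:ℝ)..z, Real.sqrt t * L := by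
      apply intervalIntegral.integral_mono_on hz.1
      · exact ((hw'c.mono (Icc_subset_Icc le_rfl hz1)).norm).intervalIntegrable_of_Icc hz.1
      · exact ((Real.continuous_sqrt.mul continuous_const).continuousOn).intervalIntegrable_of_Icc hz.1
      · exact fun x hx => stepA x ⟨hx.1, le_trans hx.2 hz.2⟩
    have h3 : ∫ t in (0:ℝ)..z, Real.sqrt t * L = 2/3 * (z * Real.sqrt z) * L := by
      rw [intervalIntegral.integral_mul_const, integral_sqrt' z hz.1]
    linarith
  -- Step C
  have hmono : ∫ z in Ioc (0:ℝ) δ, ‖w z‖ * ‖θ z‖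
      ≤ ∫ z in Ioc (0:ℝ) δ, (2/3 * L) * ((z * Real.sqrt z) * ‖θ z‖) := by
    apply setIntegral_mono_on
    · exact (((hwc.mono hIcc01).norm.mul
        ((hθc.mono hIcc01).norm)).integrableOn_Icc).mono_set Ioc_subset_Icc_self
    · apply Integrable.const_mul
      exact ((((continuous_id.mul Real.continuous_sqrt).continuousOn).mul
        ((hθc.mono hIcc01).norm)).integrableOn_Icc).mono_set Ioc_subset_Icc_self
    · exact measurableSet_Ioc
    · intro z hz
      have := stepB z (Ioc_subset_Icc_self hz)
      calc ‖w z‖ * ‖θ z‖ ≤ (2/3 * (z * Real.sqrt z) * L) * ‖θ z‖ :=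
            mul_le_mul_of_nonneg_right this (norm_nonneg _)
        _ = (2/3 * L) * ((z * Real.sqrt z) * ‖θ z‖) := by ring
  rw [MeasureTheory.integral_const_mul] at hmono
  have hcs2 : ∫ z in Ioc (0:ℝ) δ, (z * Real.sqrt z) * ‖θ z‖
      ≤ Real.sqrt (∫ z in Ioc (0:ℝ) δ, (z*Real.sqrt z)^2) * M := by
    apply cs_set measurableSet_Ioc (by simp)
      (fun z => z * Real.sqrt z) (fun z => ‖θ z‖)
      (fun z => ?_) (fun z => norm_nonneg _)
      ((continuous_id.mul Real.continuous_sqrt).aestronglyMeasurable)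
      (((hθc.mono hIcc01).norm.mono Ioc_subset_Icc_self).aestronglyMeasurable measurableSet_Ioc)
      (δ * Real.sqrt δ) Cθ
      (fun z hz => mul_le_mul hz.2 (Real.sqrt_le_sqrt hz.2) (Real.sqrt_nonneg _) hδ0.le)
      (fun z hz => hCθ z (hIcc01 (Ioc_subset_Icc_self hz)))
    show 0 ≤ z * Real.sqrt z
    rcases le_or_gt 0 z with h | h
    · exact mul_nonneg h (Real.sqrt_nonneg _)
    · rw [Real.sqrt_eq_zero_of_nonpos h.le, mul_zero]
  have hpow : ∫ z in Ioc (0:ℝ) δ, (z*Real.sqrt z)^2 = δ^4/4 := by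
    have he : ∀ z ∈ Ioc (0:ℝ) δ, (z*Real.sqrt z)^2 = z^3 := by
      intro z hz
      rw [mul_pow, Real.sq_sqrt hz.1.le]
      ring
    rw [setIntegral_congr_fun measurableSet_Ioc he, ← intervalIntegral.integral_of_le hδ0.le]
    rw [integral_pow]
    norm_num
  have hsq : Real.sqrt (∫ z in Ioc (0:ℝ) δ, (z*Real.sqrt z)^2) = δ^2/2 := by
    rw [hpow, show δ^4/4 = (δ^2/2)^2 by ring, Real.sqrt_sq (by positivity)]
  rw [hsq] at hcs2
  calc ∫ z in Ioc (0:ℝ) δ, ‖w z‖ * ‖θ z‖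
      ≤ (2/3 * L) * ∫ z in Ioc (0:ℝ) δ, (z * Real.sqrt z) * ‖θ z‖ := hmono
    _ ≤ (2/3 * L) * (δ^2/2 * M) := by
        apply mul_le_mul_of_nonneg_left hcs2 (by positivity)
    _ = (δ^2/3) * (L * M) := by ring

set_option maxHeartbeats 1000000 in
/-- Sufficiency of the spectral-constraint condition γ²δ⁴ ≤ 8/R_e: for the
piecewise-constant slope σ of the piecewise linear background, the per-mode
quadratic form is nonnegative on all fields w, θ with w = w' = 0 at z = 0,1. -/
theorem stmt_9 (δ γ Re k : ℝ) (hδ0 : 0 < δ) (hδ2 : δ ≤ 1/2)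
    (hγ : 0 < γ) (hRe : 0 < Re) (hk : 0 < k)
    (hconstr : γ^2 * δ^4 ≤ 8 / Re)
    (σ : ℝ → ℝ)
    (hσ : ∀ z ∈ Set.Icc (0:ℝ) 1, σ z = if z ≤ δ ∨ 1 - δ ≤ z then -γ else 0)
    (w w' w'' θ θ' : ℝ → ℂ)
    (hw : ∀ z ∈ Set.Icc (0:ℝ) 1, HasDerivWithinAt w (w' z) (Set.Icc 0 1) z)
    (hw' : ∀ z ∈ Set.Icc (0:ℝ) 1, HasDerivWithinAt w' (w'' z) (Set.Icc 0 1) z)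
    (hw''c : ContinuousOn w'' (Set.Icc 0 1))
    (hθ : ∀ z ∈ Set.Icc (0:ℝ) 1, HasDerivWithinAt θ (θ' z) (Set.Icc 0 1) z)
    (hθ'c : ContinuousOn θ' (Set.Icc 0 1))
    (hw0 : w 0 = 0) (hw1 : w 1 = 0) (hw'0 : w' 0 = 0) (hw'1 : w' 1 = 0) :
    0 ≤ ∫ z in (0:ℝ)..1,
      ((1/Re) * (k^2 * ‖w z‖^2 + 2 * ‖w' z‖^2 + (1/k^2) * ‖w'' z‖^2)
        + 2 * σ z * (w z * starRingEnd ℂ (θ z)).re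
        + k^2 * ‖θ z‖^2 + ‖θ' z‖^2) := by
  have hδ1 : δ ≤ 1 := le_trans hδ2 (by norm_num)
  have h1δ : (0:ℝ) < 1 - δ := by linarith
  -- replace σ by the explicit function
  set sfun : ℝ → ℝ := fun z => if z ≤ δ ∨ 1 - δ ≤ z then -γ else 0 with hsfun
  set fg : ℝ → ℝ := fun z => ‖w z‖ * ‖θ z‖ with hfg
  have hEq : Set.EqOn
      (fun z => ((1/Re) * (k^2 * ‖w z‖^2 + 2 * ‖w' z‖^2 + (1/k^2) * ‖w'' z‖^2)
        + 2 * σ z * (w z * starRingEnd ℂ (θ z)).re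
        + k^2 * ‖θ z‖^2 + ‖θ' z‖^2))
      (fun z => ((1/Re) * (k^2 * ‖w z‖^2 + 2 * ‖w' z‖^2 + (1/k^2) * ‖w'' z‖^2)
        + 2 * sfun z * (w z * starRingEnd ℂ (θ z)).re
        + k^2 * ‖θ z‖^2 + ‖θ' z‖^2)) (Set.uIcc 0 1) := by
    intro z hz
    rw [Set.uIcc_of_le (by norm_num : (0:ℝ) ≤ 1)] at hz
    simp only [hσ z hz, hsfun]
  rw [intervalIntegral.integral_congr hEq]
  -- basic continuity facts
  have hwc : ContinuousOn w (Icc (0:ℝ) 1) := fun z hz => (hw z hz).continuousWithinAt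
  have hw'c : ContinuousOn w' (Icc (0:ℝ) 1) := fun z hz => (hw' z hz).continuousWithinAt
  have hθc : ContinuousOn θ (Icc (0:ℝ) 1) := fun z hz => (hθ z hz).continuousWithinAt
  have hhc : ContinuousOn (fun z => (w z * starRingEnd ℂ (θ z)).re) (Icc (0:ℝ) 1) :=
    Complex.continuous_re.comp_continuousOn
      (hwc.mul (continuous_star.comp_continuousOn hθc))
  have hsm : Measurable sfun := by
    apply Measurable.ite _ measurable_const measurable_const
    exact (measurableSet_le measurable_id measurable_const).union
      (measurableSet_le measurable_const measurable_id)
  have hsb : ∀ z, ‖2 * sfun z‖ ≤ 2*γ := by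
    intro z
    simp only [hsfun]
    split_ifs <;> simp [abs_of_pos hγ, abs_of_nonneg hγ.le] <;> positivity
  -- integrability of the cross term
  have hInt_h : IntegrableOn (fun z => (w z * starRingEnd ℂ (θ z)).re) (Ioc (0:ℝ) 1) volume :=
    (hhc.integrableOn_Icc).mono_set Ioc_subset_Icc_self
  have hInt_cross : IntegrableOn (fun z => 2 * sfun z * (w z * starRingEnd ℂ (θ z)).re)
      (Ioc (0:ℝ) 1) volume := by
    apply hInt_h.bdd_mul ((measurable_const.mul hsm).aestronglyMeasurable) (Filter.Eventually.of_forall hsb)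
  have hII_cross : IntervalIntegrable
      (fun z => 2 * sfun z * (w z * starRingEnd ℂ (θ z)).re) volume 0 1 := by
    rw [intervalIntegrable_iff, Set.uIoc_of_le (by norm_num : (0:ℝ) ≤ 1)]
    exact hInt_cross
  -- interval integrability of the full integrand and of the lower bound q
  have hII_full : IntervalIntegrable
      (fun z => ((1/Re) * (k^2 * ‖w z‖^2 + 2 * ‖w' z‖^2 + (1/k^2) * ‖w'' z‖^2)
        + 2 * sfun z * (w z * starRingEnd ℂ (θ z)).re
        + k^2 * ‖θ z‖^2 + ‖θ' z‖^2)) volume 0 1 := by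
    apply IntervalIntegrable.add
    apply IntervalIntegrable.add
    apply IntervalIntegrable.add
    · apply ContinuousOn.intervalIntegrable
      rw [Set.uIcc_of_le (by norm_num : (0:ℝ) ≤ 1)]
      exact (continuousOn_const.mul (((continuousOn_const.mul (hwc.norm.pow 2)).add
        (continuousOn_const.mul (hw'c.norm.pow 2))).add
        (continuousOn_const.mul (hw''c.norm.pow 2))))
    · exact hII_cross
    · apply ContinuousOn.intervalIntegrable
      rw [Set.uIcc_of_le (by norm_num : (0:ℝ) ≤ 1)]
      exact continuousOn_const.mul (hθc.norm.pow 2)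
    · apply ContinuousOn.intervalIntegrable
      rw [Set.uIcc_of_le (by norm_num : (0:ℝ) ≤ 1)]
      exact hθ'c.norm.pow 2
  have hII_w'' : IntervalIntegrable (fun z => ‖w'' z‖^2) volume 0 1 := by
    apply ContinuousOn.intervalIntegrable
    rw [Set.uIcc_of_le (by norm_num : (0:ℝ) ≤ 1)]
    exact hw''c.norm.pow 2
  have hII_θ : IntervalIntegrable (fun z => ‖θ z‖^2) volume 0 1 := by
    apply ContinuousOn.intervalIntegrable
    rw [Set.uIcc_of_le (by norm_num : (0:ℝ) ≤ 1)]
    exact hθc.norm.pow 2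
  have hII_q : IntervalIntegrable
      (fun z => (1/(Re*k^2)) * ‖w'' z‖^2 + k^2 * ‖θ z‖^2
        + 2 * sfun z * (w z * starRingEnd ℂ (θ z)).re) volume 0 1 :=
    ((hII_w''.const_mul _).add (hII_θ.const_mul _)).add hII_cross
  -- the integrand dominates q
  have hdom : ∀ z ∈ Icc (0:ℝ) 1,
      (1/(Re*k^2)) * ‖w'' z‖^2 + k^2 * ‖θ z‖^2
        + 2 * sfun z * (w z * starRingEnd ℂ (θ z)).re
      ≤ (1/Re) * (k^2 * ‖w z‖^2 + 2 * ‖w' z‖^2 + (1/k^2) * ‖w'' z‖^2)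
        + 2 * sfun z * (w z * starRingEnd ℂ (θ z)).re
        + k^2 * ‖θ z‖^2 + ‖θ' z‖^2 := by
    intro z _
    have e : (1:ℝ)/(Re*k^2) = (1/Re) * (1/k^2) := by
      field_simp
    have h1 : 0 ≤ (1/Re) * (k^2 * ‖w z‖^2 + 2 * ‖w' z‖^2) := by positivity
    have h2 : 0 ≤ ‖θ' z‖^2 := sq_nonneg _
    nlinarith [sq_nonneg ‖w'' z‖]
  refine le_trans ?_ (intervalIntegral.integral_mono_on (by norm_num) hII_q hII_full hdom)
  -- split the integral of q
  set W : ℝ := ∫ z in (0:ℝ)..1, ‖w'' z‖^2 with hW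
  set T : ℝ := ∫ z in (0:ℝ)..1, ‖θ z‖^2 with hT
  have hsplit : ∫ z in (0:ℝ)..1, ((1/(Re*k^2)) * ‖w'' z‖^2 + k^2 * ‖θ z‖^2
        + 2 * sfun z * (w z * starRingEnd ℂ (θ z)).re)
      = (1/(Re*k^2)) * W + k^2 * T
        + ∫ z in (0:ℝ)..1, 2 * sfun z * (w z * starRingEnd ℂ (θ z)).re := by
    rw [intervalIntegral.integral_add ((hII_w''.const_mul _).add (hII_θ.const_mul _)) hII_cross,
      intervalIntegral.integral_add (hII_w''.const_mul _) (hII_θ.const_mul _),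
      intervalIntegral.integral_const_mul, intervalIntegral.integral_const_mul]
  rw [hsplit]
  -- lower bound for the cross term
  set I₁ : ℝ := ∫ z in Ioc (0:ℝ) δ, fg z with hI₁
  set I₂ : ℝ := ∫ z in Icc (1-δ) 1, fg z with hI₂
  have hfgc : ContinuousOn fg (Icc (0:ℝ) 1) := hwc.norm.mul hθc.norm
  have hfg_int1 : IntegrableOn fg (Icc (0:ℝ) δ) volume :=
    (hfgc.mono (Icc_subset_Icc le_rfl hδ1)).integrableOn_Icc
  have hfg_int2 : IntegrableOn fg (Icc (1-δ) 1) volume :=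
    (hfgc.mono (Icc_subset_Icc (by linarith) le_rfl)).integrableOn_Icc
  have hind1 : Integrable ((Icc (0:ℝ) δ).indicator fg) volume :=
    hfg_int1.integrable_indicator measurableSet_Icc
  have hind2 : Integrable ((Icc (1-δ) 1).indicator fg) volume :=
    hfg_int2.integrable_indicator measurableSet_Icc
  have hII_g : IntervalIntegrable (fun z => (-(2*γ)) * ((Icc (0:ℝ) δ).indicator fg z
      + (Icc (1-δ) 1).indicator fg z)) volume 0 1 :=
    ((hind1.add hind2).const_mul (-(2*γ))).intervalIntegrable
  have hcross_lb : ∫ z in (0:ℝ)..1, (-(2*γ)) * ((Icc (0:ℝ) δ).indicator fg z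
        + (Icc (1-δ) 1).indicator fg z)
      ≤ ∫ z in (0:ℝ)..1, 2 * sfun z * (w z * starRingEnd ℂ (θ z)).re := by
    apply intervalIntegral.integral_mono_on (by norm_num) hII_g hII_cross
    intro z hz
    have hre : (w z * starRingEnd ℂ (θ z)).re ≤ fg z := by
      calc (w z * starRingEnd ℂ (θ z)).re ≤ ‖w z * starRingEnd ℂ (θ z)‖ :=
            Complex.re_le_norm _
        _ = ‖w z‖ * ‖θ z‖ := by rw [norm_mul, RCLike.norm_conj]
    have hfg0 : (0:ℝ) ≤ fg z := mul_nonneg (norm_nonneg _) (norm_nonneg _)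
    by_cases hcond : z ≤ δ ∨ 1 - δ ≤ z
    · have hs : sfun z = -γ := if_pos hcond
      rw [hs]
      have hindsum : fg z ≤ (Icc (0:ℝ) δ).indicator fg z + (Icc (1-δ) 1).indicator fg z := by
        rcases hcond with h | h
        · have hmem : z ∈ Icc (0:ℝ) δ := ⟨hz.1, h⟩
          rw [Set.indicator_of_mem hmem]
          exact le_add_of_nonneg_right (Set.indicator_nonneg (fun t _ => mul_nonneg (norm_nonneg _) (norm_nonneg _)) _)
        · have hmem : z ∈ Icc (1-δ) 1 := ⟨h, hz.2⟩
          rw [Set.indicator_of_mem hmem]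
          exact le_add_of_nonneg_left (Set.indicator_nonneg (fun t _ => mul_nonneg (norm_nonneg _) (norm_nonneg _)) _)
      nlinarith
    · have hs : sfun z = 0 := if_neg hcond
      push_neg at hcond
      have hnm1 : z ∉ Icc (0:ℝ) δ := fun hmem => absurd hmem.2 (not_le.2 hcond.1)
      have hnm2 : z ∉ Icc (1-δ) 1 := fun hmem => absurd hmem.1 (not_le.2 hcond.2)
      rw [hs, Set.indicator_of_notMem hnm1, Set.indicator_of_notMem hnm2]
      norm_num
  have hgval : ∫ z in (0:ℝ)..1, (-(2*γ)) * ((Icc (0:ℝ) δ).indicator fg z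
      + (Icc (1-δ) 1).indicator fg z) = (-(2*γ)) * (I₁ + I₂) := by
    rw [intervalIntegral.integral_const_mul]
    congr 1
    rw [intervalIntegral.integral_of_le (by norm_num : (0:ℝ) ≤ 1)]
    rw [integral_add (hind1.integrableOn) (hind2.integrableOn)]
    have hset1 : Ioc (0:ℝ) 1 ∩ Icc 0 δ = Ioc 0 δ := by
      ext x
      simp only [Set.mem_inter_iff, Set.mem_Ioc, Set.mem_Icc]
      constructor
      · rintro ⟨⟨h1, _⟩, ⟨_, h2⟩⟩; exact ⟨h1, h2⟩
      · rintro ⟨h1, h2⟩; exact ⟨⟨h1, le_trans h2 hδ1⟩, ⟨h1.le, h2⟩⟩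
    have hset2 : Ioc (0:ℝ) 1 ∩ Icc (1-δ) 1 = Icc (1-δ) 1 := by
      rw [Set.inter_eq_right]
      intro x hx
      exact ⟨lt_of_lt_of_le h1δ hx.1, hx.2⟩
    rw [setIntegral_indicator measurableSet_Icc, setIntegral_indicator measurableSet_Icc,
      hset1, hset2]
  -- reflection: second boundary layer
  have hmaps : Set.MapsTo (fun z : ℝ => 1 - z) (Icc 0 1) (Icc 0 1) := by
    intro z hz
    simp only [Set.mem_Icc] at hz ⊢
    constructor <;> linarith [hz.1, hz.2]
  have hneg : ∀ z ∈ Icc (0:ℝ) 1, HasDerivWithinAt (fun z : ℝ => 1 - z) (-1) (Icc 0 1) z :=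
    fun z hz => (hasDerivWithinAt_id z _).const_sub 1
  have hWr : ∀ z ∈ Icc (0:ℝ) 1,
      HasDerivWithinAt (fun z => w (1-z)) (-(w' (1-z))) (Icc 0 1) z := by
    intro z hz
    have h1 := (hw (1-z) (hmaps hz)).scomp z (hneg z hz) hmaps
    simpa [Function.comp_def] using h1
  have hW'r : ∀ z ∈ Icc (0:ℝ) 1,
      HasDerivWithinAt (fun z => -(w' (1-z))) (w'' (1-z)) (Icc 0 1) z := by
    intro z hz
    have h1 := ((hw' (1-z) (hmaps hz)).scomp z (hneg z hz) hmaps).neg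
    simpa [Function.comp_def, Pi.neg_def] using h1
  have hW''rc : ContinuousOn (fun z => w'' (1-z)) (Icc (0:ℝ) 1) :=
    hw''c.comp ((continuous_const.sub continuous_id).continuousOn) hmaps
  have hΘrc : ContinuousOn (fun z => θ (1-z)) (Icc (0:ℝ) 1) :=
    hθc.comp ((continuous_const.sub continuous_id).continuousOn) hmaps
  -- layer estimates
  have hlayer1 := layer_bound δ hδ0 hδ1 w w' w'' θ hw hw' hw''c hθc hw0 hw'0
  have hlayer2 := layer_bound δ hδ0 hδ1 (fun z => w (1-z)) (fun z => -(w' (1-z)))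
    (fun z => w'' (1-z)) (fun z => θ (1-z)) hWr hW'r hW''rc hΘrc
    (by norm_num [hw1]) (by norm_num [hw'1])
  have e2 : ∫ z in Ioc (0:ℝ) δ, ‖w (1-z)‖ * ‖θ (1-z)‖ = I₂ :=
    refl_integral (fun z => ‖w z‖ * ‖θ z‖) δ hδ0.le hδ1
  have e3 : ∫ z in Ioc (0:ℝ) δ, ‖w'' (1-z)‖^2 = ∫ z in Icc (1-δ) 1, ‖w'' z‖^2 :=
    refl_integral (fun z => ‖w'' z‖^2) δ hδ0.le hδ1
  have e4 : ∫ z in Ioc (0:ℝ) δ, ‖θ (1-z)‖^2 = ∫ z in Icc (1-δ) 1, ‖θ z‖^2 :=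
    refl_integral (fun z => ‖θ z‖^2) δ hδ0.le hδ1
  rw [e2, e3, e4] at hlayer2
  set a := Real.sqrt (∫ z in Ioc (0:ℝ) δ, ‖w'' z‖^2) with haa
  set b := Real.sqrt (∫ z in Ioc (0:ℝ) δ, ‖θ z‖^2) with hbb
  set c := Real.sqrt (∫ z in Icc (1-δ) 1, ‖w'' z‖^2) with hcc
  set d := Real.sqrt (∫ z in Icc (1-δ) 1, ‖θ z‖^2) with hdd
  have ha2 : a^2 = ∫ z in Ioc (0:ℝ) δ, ‖w'' z‖^2 :=
    Real.sq_sqrt (setIntegral_nonneg measurableSet_Ioc fun z _ => sq_nonneg _)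
  have hb2 : b^2 = ∫ z in Ioc (0:ℝ) δ, ‖θ z‖^2 :=
    Real.sq_sqrt (setIntegral_nonneg measurableSet_Ioc fun z _ => sq_nonneg _)
  have hc2 : c^2 = ∫ z in Icc (1-δ) 1, ‖w'' z‖^2 :=
    Real.sq_sqrt (setIntegral_nonneg measurableSet_Icc fun z _ => sq_nonneg _)
  have hd2 : d^2 = ∫ z in Icc (1-δ) 1, ‖θ z‖^2 :=
    Real.sq_sqrt (setIntegral_nonneg measurableSet_Icc fun z _ => sq_nonneg _)
  -- sums of layer integrals are bounded by total integrals
  have hsub1 : Ioc (0:ℝ) δ ⊆ Ioc 0 1 := Ioc_subset_Ioc le_rfl hδ1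
  have hsub2 : Ioc (1-δ:ℝ) 1 ⊆ Ioc 0 1 := Ioc_subset_Ioc (by linarith) le_rfl
  have hdisj : Disjoint (Ioc (0:ℝ) δ) (Ioc (1-δ) 1) := by
    rw [Set.disjoint_left]
    intro x h1 h2
    have := h1.2
    have := h2.1
    linarith
  have hsum : ∀ (F : ℝ → ℝ), (∀ z, 0 ≤ F z) → IntegrableOn F (Ioc (0:ℝ) 1) volume →
      (∫ z in Ioc (0:ℝ) δ, F z) + (∫ z in Icc (1-δ) 1, F z) ≤ ∫ z in Ioc (0:ℝ) 1, F z := by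
    intro F hF0 hFint
    rw [integral_Icc_eq_integral_Ioc,
      ← setIntegral_union hdisj measurableSet_Ioc (hFint.mono_set hsub1) (hFint.mono_set hsub2)]
    apply setIntegral_mono_set hFint (Filter.Eventually.of_forall hF0)
      (HasSubset.Subset.eventuallyLE (Set.union_subset hsub1 hsub2))
  have hW01 : ∫ z in (0:ℝ)..1, ‖w'' z‖^2 = ∫ z in Ioc (0:ℝ) 1, ‖w'' z‖^2 :=
    intervalIntegral.integral_of_le (by norm_num)
  have hT01 : ∫ z in (0:ℝ)..1, ‖θ z‖^2 = ∫ z in Ioc (0:ℝ) 1, ‖θ z‖^2 :=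
    intervalIntegral.integral_of_le (by norm_num)
  have hWsum : a^2 + c^2 ≤ W := by
    rw [ha2, hc2, hW, hW01]
    exact hsum _ (fun z => sq_nonneg _)
      ((hw''c.norm.pow 2).integrableOn_Icc.mono_set Ioc_subset_Icc_self)
  have hTsum : b^2 + d^2 ≤ T := by
    rw [hb2, hd2, hT, hT01]
    exact hsum _ (fun z => sq_nonneg _)
      ((hθc.norm.pow 2).integrableOn_Icc.mono_set Ioc_subset_Icc_self)
  -- Young's inequality applications
  have hC2 : (2*γ*(δ^2/3))^2 ≤ 4*((1/(Re*k^2))*k^2) := by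
    have e : 4*((1/(Re*k^2))*k^2) = 4*(1/Re) := by
      field_simp
    rw [e]
    have h1 : (2*γ*(δ^2/3))^2 = (4/9)*(γ^2*δ^4) := by ring
    have h2 : (4:ℝ)/9*(γ^2*δ^4) ≤ (4/9)*(8/Re) :=
      mul_le_mul_of_nonneg_left hconstr (by norm_num)
    have h3 : (4:ℝ)/9*(8/Re) ≤ 4*(1/Re) := by
      rw [show (4:ℝ)/9*(8/Re) = (32/9)*(1/Re) by ring]
      exact mul_le_mul_of_nonneg_right (by norm_num) (by positivity)
    linarith
  have ha0 : 0 ≤ a := Real.sqrt_nonneg _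
  have hb0 : 0 ≤ b := Real.sqrt_nonneg _
  have hc0 : 0 ≤ c := Real.sqrt_nonneg _
  have hd0 : 0 ≤ d := Real.sqrt_nonneg _
  have hy1 := young_aux (1/(Re*k^2)) (k^2) (2*γ*(δ^2/3)) a b (by positivity) (by positivity)
    (by positivity) ha0 hb0 hC2
  have hy2 := young_aux (1/(Re*k^2)) (k^2) (2*γ*(δ^2/3)) c d (by positivity) (by positivity)
    (by positivity) hc0 hd0 hC2
  have hI1' : 2*γ*I₁ ≤ (2*γ*(δ^2/3))*(a*b) := by
    calc 2*γ*I₁ ≤ 2*γ*((δ^2/3)*(a*b)) :=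
          mul_le_mul_of_nonneg_left hlayer1 (by positivity)
      _ = (2*γ*(δ^2/3))*(a*b) := by ring
  have hI2' : 2*γ*I₂ ≤ (2*γ*(δ^2/3))*(c*d) := by
    calc 2*γ*I₂ ≤ 2*γ*((δ^2/3)*(c*d)) :=
          mul_le_mul_of_nonneg_left hlayer2 (by positivity)
      _ = (2*γ*(δ^2/3))*(c*d) := by ring
  have hPW : (1/(Re*k^2))*(a^2+c^2) ≤ (1/(Re*k^2))*W :=
    mul_le_mul_of_nonneg_left hWsum (by positivity)
  have hQT : k^2*(b^2+d^2) ≤ k^2*T :=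
    mul_le_mul_of_nonneg_left hTsum (by positivity)
  have hfinal : -(2*γ)*(I₁+I₂) = -(2*γ*I₁) - (2*γ*I₂) := by ring
  rw [hgval, hfinal] at hcross_lb
  linarith [hcross_lb, hI1', hI2', hy1, hy2, hPW, hQT]
end

section
/- Let w, θ be complex-valued functions on [0, 1/2], with w twice continuously differentiable, θ continuously differentiable, w(0) = 0 and w'(0) = 0. Then for every z ∈ [0, 1/2] and all real a₁ > 0, a₂ > 0, k > 0: |w(z)·conj(θ(z))| ≤ (z/(2√2))·[ a₁·∫₀^{1/2} |w'|² + (1/a₁)·∫₀^{1/2} |θ'|² + (a₂/k²)·∫₀^{1/2} |w''|² + (k²/a₂)·∫₀^{1/2} |θ|² ]. -/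
open Set MeasureTheory intervalIntegral

-- Cauchy–Schwarz via Young's inequality
lemma cs_aux {h : ℝ → ℝ} {b : ℝ} (hb : 0 ≤ b) (hc : ContinuousOn h (Icc 0 b))
    (hpos : ∀ x ∈ Icc (0:ℝ) b, 0 ≤ h x) :
    (∫ x in (0:ℝ)..b, h x)^2 ≤ b * ∫ x in (0:ℝ)..b, (h x)^2 := by
  have huIcc : uIcc (0:ℝ) b = Icc 0 b := uIcc_of_le hb
  have hint : IntervalIntegrable h volume 0 b :=
    (hc.mono (by rw [huIcc])).intervalIntegrable
  have hint2 : IntervalIntegrable (fun x => (h x)^2) volume 0 b :=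
    ((hc.pow 2).mono (by rw [huIcc])).intervalIntegrable
  set A := ∫ x in (0:ℝ)..b, h x with hA
  set S := ∫ x in (0:ℝ)..b, (h x)^2 with hS
  have hA0 : 0 ≤ A := intervalIntegral.integral_nonneg hb (fun x hx => hpos x hx)
  have hS0 : 0 ≤ S := intervalIntegral.integral_nonneg hb (fun x hx => sq_nonneg _)
  have key : ∀ u : ℝ, 0 < u → u * A ≤ (S + u^2 * b)/2 := by
    intro u hu
    have h1 : (∫ x in (0:ℝ)..b, u * h x) ≤ ∫ x in (0:ℝ)..b, ((h x)^2 + u^2)/2 := by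
      apply intervalIntegral.integral_mono_on hb (hint.const_mul u)
        ((hint2.add (intervalIntegrable_const)).div_const 2)
      intro x hx
      nlinarith [sq_nonneg (h x - u)]
    have h2 : (∫ x in (0:ℝ)..b, u * h x) = u * A := intervalIntegral.integral_const_mul u h
    have h3 : (∫ x in (0:ℝ)..b, ((h x)^2 + u^2)/2) = (S + u^2 * b)/2 := by
      rw [intervalIntegral.integral_div, intervalIntegral.integral_add hint2 intervalIntegrable_const,
        intervalIntegral.integral_const]
      simp [smul_eq_mul, ← hS]
      ring
    rw [h2, h3] at h1
    exact h1
  have hsq : A ≤ Real.sqrt (b * S) := by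
    rcases eq_or_lt_of_le hb with hb0 | hb0
    · have : A = 0 := by rw [hA, ← hb0, intervalIntegral.integral_same]
      rw [this]; exact Real.sqrt_nonneg _
    rcases eq_or_lt_of_le hS0 with hS0' | hSpos
    · have hAle : A ≤ 0 := by
        by_contra hcon
        push_neg at hcon
        have hu : 0 < A / b := div_pos hcon hb0
        have hk := key (A/b) hu
        rw [← hS0'] at hk
        have h5 : A/b*A = A^2/b := by ring
        have h6 : (0 + (A/b)^2*b)/2 = A^2/b/2 := by field_simp; ring
        rw [h5, h6] at hk
        have hpos' : 0 < A^2/b := div_pos (by positivity) hb0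
        linarith
      calc A ≤ 0 := hAle
        _ ≤ _ := Real.sqrt_nonneg _
    · set u := Real.sqrt (S/b) with hu
      have hupos : 0 < u := Real.sqrt_pos.2 (div_pos hSpos hb0)
      have hkey := key u hupos
      have hu2 : u^2 = S/b := Real.sq_sqrt (le_of_lt (div_pos hSpos hb0))
      rw [hu2] at hkey
      have hAS : u * A ≤ S := by
        have hc' : S/b * b = S := div_mul_cancel₀ S (ne_of_gt hb0)
        rw [hc'] at hkey
        linarith
      have husq : u * Real.sqrt (b*S) = S := by
        rw [hu, ← Real.sqrt_mul (le_of_lt (div_pos hSpos hb0))]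
        rw [show S/b*(b*S) = S^2 by field_simp, Real.sqrt_sq hS0]
      have : u * A ≤ u * Real.sqrt (b*S) := by rw [husq]; exact hAS
      exact le_of_mul_le_mul_left this hupos
  calc A^2 ≤ (Real.sqrt (b*S))^2 := by
        apply pow_le_pow_left₀ hA0 hsq
    _ = b * S := Real.sq_sqrt (mul_nonneg hb hS0)

-- Pointwise bound: ‖g ζ‖² ≤ ζ ∫₀^{1/2} ‖f‖² when g(0)=0, g'=f on Icc 0 (1/2)
lemma ptwise_aux {g f : ℝ → ℂ}
    (hg : ∀ x ∈ Icc (0:ℝ) (1/2), HasDerivWithinAt g (f x) (Icc 0 (1/2)) x)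
    (hfc : ContinuousOn f (Icc 0 (1/2))) (hg0 : g 0 = 0)
    {ζ : ℝ} (hζ : ζ ∈ Icc (0:ℝ) (1/2)) :
    ‖g ζ‖^2 ≤ ζ * ∫ x in (0:ℝ)..(1/2), ‖f x‖^2 := by
  obtain ⟨hζ0, hζ2⟩ := hζ
  have hsub : Icc (0:ℝ) ζ ⊆ Icc 0 (1/2) := Icc_subset_Icc le_rfl hζ2
  have hgc : ContinuousOn g (Icc 0 (1/2)) := fun x hx => (hg x hx).continuousWithinAt
  have hftc : ∫ x in (0:ℝ)..ζ, f x = g ζ - g 0 := by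
    apply intervalIntegral.integral_eq_sub_of_hasDeriv_right_of_le hζ0
      (hgc.mono hsub)
    · intro x hx
      have hx' : x ∈ Icc (0:ℝ) (1/2) := ⟨hx.1.le, le_of_lt (lt_of_lt_of_le hx.2 hζ2)⟩
      apply (hg x hx').mono_of_mem_nhdsWithin
      apply Filter.mem_of_superset (Ioc_mem_nhdsGT_of_mem
        ⟨le_refl x, lt_of_lt_of_le hx.2 hζ2⟩)
      exact fun y hy => ⟨le_trans hx.1.le (le_of_lt hy.1), hy.2⟩
    · exact ((hfc.mono hsub).mono (by rw [uIcc_of_le hζ0])).intervalIntegrable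
  have hnorm : ‖g ζ‖ ≤ ∫ x in (0:ℝ)..ζ, ‖f x‖ := by
    rw [show g ζ = ∫ x in (0:ℝ)..ζ, f x by rw [hftc, hg0, sub_zero]]
    exact intervalIntegral.norm_integral_le_integral_norm hζ0
  have hcs : (∫ x in (0:ℝ)..ζ, ‖f x‖)^2 ≤ ζ * ∫ x in (0:ℝ)..ζ, ‖f x‖^2 :=
    cs_aux hζ0 ((hfc.mono hsub).norm) (fun x _ => norm_nonneg _)
  have hmono : (∫ x in (0:ℝ)..ζ, ‖f x‖^2) ≤ ∫ x in (0:ℝ)..(1/2), ‖f x‖^2 := by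
    have h1 : IntervalIntegrable (fun x => ‖f x‖^2) volume 0 ζ :=
      (((hfc.mono hsub).norm.pow 2).mono (by rw [uIcc_of_le hζ0])).intervalIntegrable
    have h2 : IntervalIntegrable (fun x => ‖f x‖^2) volume ζ (1/2) :=
      (((hfc.mono (Icc_subset_Icc hζ0 le_rfl)).norm.pow 2).mono
        (by rw [uIcc_of_le hζ2])).intervalIntegrable
    have h3 : 0 ≤ ∫ x in ζ..(1/2), ‖f x‖^2 :=
      intervalIntegral.integral_nonneg hζ2 (fun x _ => by positivity)
    have := intervalIntegral.integral_add_adjacent_intervals h1 h2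
    linarith
  calc ‖g ζ‖^2 ≤ (∫ x in (0:ℝ)..ζ, ‖f x‖)^2 :=
        pow_le_pow_left₀ (norm_nonneg _) hnorm 2
    _ ≤ ζ * ∫ x in (0:ℝ)..ζ, ‖f x‖^2 := hcs
    _ ≤ ζ * ∫ x in (0:ℝ)..(1/2), ‖f x‖^2 := by
        apply mul_le_mul_of_nonneg_left hmono hζ0

lemma young_aux_s10 {a b p : ℝ} (hp : 0 < p) : a*b ≤ (p*a^2 + b^2/p)/2 := by
  rw [← sub_nonneg]
  have h : (p*a^2 + b^2/p)/2 - a*b = (p*a-b)^2/(2*p) := by field_simp; ring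
  rw [h]; positivity

lemma mono_aux {f : ℝ → ℂ} (hfc : ContinuousOn f (Icc 0 (1/2))) {z : ℝ}
    (hz0 : 0 ≤ z) (hz2 : z ≤ 1/2) :
    (∫ x in (0:ℝ)..z, ‖f x‖^2) ≤ ∫ x in (0:ℝ)..(1/2), ‖f x‖^2 := by
  have h1 : IntervalIntegrable (fun x => ‖f x‖^2) volume 0 z :=
    (((hfc.mono (Icc_subset_Icc le_rfl hz2)).norm.pow 2).mono
      (by rw [uIcc_of_le hz0])).intervalIntegrable
  have h2 : IntervalIntegrable (fun x => ‖f x‖^2) volume z (1/2) :=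
    (((hfc.mono (Icc_subset_Icc hz0 le_rfl)).norm.pow 2).mono
      (by rw [uIcc_of_le hz2])).intervalIntegrable
  have h3 : 0 ≤ ∫ x in z..(1/2), ‖f x‖^2 :=
    intervalIntegral.integral_nonneg hz2 (fun x _ => by positivity)
  have := intervalIntegral.integral_add_adjacent_intervals h1 h2
  linarith


set_option maxHeartbeats 1000000 in
/-- Pointwise Cauchy–Schwarz/Young estimate on [0,1/2]: for w twice continuously
differentiable and θ continuously differentiable with w(0) = w'(0) = 0,
|w(z)·conj(θ(z))| ≤ (z/(2√2))[a₁∫|w'|² + (1/a₁)∫|θ'|² + (a₂/k²)∫|w''|² + (k²/a₂)∫|θ|²]. -/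
theorem stmt_10 (w w' w'' θ θ' : ℝ → ℂ)
    (hw : ∀ z ∈ Set.Icc (0:ℝ) (1/2), HasDerivWithinAt w (w' z) (Set.Icc 0 (1/2)) z)
    (hw' : ∀ z ∈ Set.Icc (0:ℝ) (1/2), HasDerivWithinAt w' (w'' z) (Set.Icc 0 (1/2)) z)
    (hw''c : ContinuousOn w'' (Set.Icc 0 (1/2)))
    (hθ : ∀ z ∈ Set.Icc (0:ℝ) (1/2), HasDerivWithinAt θ (θ' z) (Set.Icc 0 (1/2)) z)
    (hθ'c : ContinuousOn θ' (Set.Icc 0 (1/2)))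
    (hw0 : w 0 = 0) (hw'0 : w' 0 = 0)
    (z : ℝ) (hz : z ∈ Set.Icc (0:ℝ) (1/2))
    (a₁ a₂ k : ℝ) (ha₁ : 0 < a₁) (ha₂ : 0 < a₂) (hk : 0 < k) :
    ‖w z * starRingEnd ℂ (θ z)‖ ≤ (z / (2 * Real.sqrt 2)) *
      (a₁ * (∫ ζ in (0:ℝ)..(1/2), ‖w' ζ‖^2)
        + (1/a₁) * (∫ ζ in (0:ℝ)..(1/2), ‖θ' ζ‖^2)
        + (a₂/k^2) * (∫ ζ in (0:ℝ)..(1/2), ‖w'' ζ‖^2)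
        + (k^2/a₂) * (∫ ζ in (0:ℝ)..(1/2), ‖θ ζ‖^2)) := by
  obtain ⟨hz0, hz2⟩ := hz
  have hwc : ContinuousOn w (Icc 0 (1/2)) := fun x hx => (hw x hx).continuousWithinAt
  have hw'c : ContinuousOn w' (Icc 0 (1/2)) := fun x hx => (hw' x hx).continuousWithinAt
  have hθc : ContinuousOn θ (Icc 0 (1/2)) := fun x hx => (hθ x hx).continuousWithinAt
  set W1 := ∫ ζ in (0:ℝ)..(1/2), ‖w' ζ‖^2 with hW1
  set W2 := ∫ ζ in (0:ℝ)..(1/2), ‖w'' ζ‖^2 with hW2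
  set T1 := ∫ ζ in (0:ℝ)..(1/2), ‖θ' ζ‖^2 with hT1
  set T0 := ∫ ζ in (0:ℝ)..(1/2), ‖θ ζ‖^2 with hT0
  have hW1n : 0 ≤ W1 := intervalIntegral.integral_nonneg (by norm_num) (fun x _ => by positivity)
  have hW2n : 0 ≤ W2 := intervalIntegral.integral_nonneg (by norm_num) (fun x _ => by positivity)
  rcases eq_or_lt_of_le hz0 with hzz | hzpos
  · rw [← hzz, hw0]
    simp
  -- notation
  set s := Real.sqrt 2 with hs
  have hs0 : 0 < s := Real.sqrt_pos.2 (by norm_num)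
  have hs2 : s^2 = 2 := Real.sq_sqrt (by norm_num)
  set t := z / s with ht
  have ht0 : 0 < t := div_pos hzpos hs0
  set c := a₂ / k^2 with hc
  have hc0 : 0 < c := div_pos ha₂ (by positivity)
  -- derivative of the product
  set G : ℝ → ℂ := fun x => w' x * (starRingEnd ℂ) (θ x) + w x * (starRingEnd ℂ) (θ' x) with hG
  have hGd : ∀ x ∈ Icc (0:ℝ) (1/2),
      HasDerivWithinAt (fun y => w y * (starRingEnd ℂ) (θ y)) (G x) (Icc 0 (1/2)) x := by
    intro x hx
    have h := (hw x hx).mul ((hθ x hx).star)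
    simp only [starRingEnd_apply]
    exact h
  have hGc : ContinuousOn G (Icc 0 (1/2)) :=
    ((hw'c.mul hθc.star).add (hwc.mul hθ'c.star))
  -- FTC
  have hftc : ∫ x in (0:ℝ)..z, G x = w z * (starRingEnd ℂ) (θ z) := by
    have := intervalIntegral.integral_eq_sub_of_hasDeriv_right_of_le hz0
      (f := fun y => w y * (starRingEnd ℂ) (θ y)) (f' := G)
      (((hwc.mul hθc.star)).mono (Icc_subset_Icc le_rfl hz2))
      ?_ ?_
    · rw [this]; simp [hw0]
    · intro x hx
      have hx' : x ∈ Icc (0:ℝ) (1/2) := ⟨hx.1.le, le_of_lt (lt_of_lt_of_le hx.2 hz2)⟩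
      apply (hGd x hx').mono_of_mem_nhdsWithin
      apply Filter.mem_of_superset (Ioc_mem_nhdsGT_of_mem
        ⟨le_refl x, lt_of_lt_of_le hx.2 hz2⟩)
      exact fun y hy => ⟨le_trans hx.1.le (le_of_lt hy.1), hy.2⟩
    · exact ((hGc.mono (Icc_subset_Icc le_rfl hz2)).mono
        (by rw [uIcc_of_le hz0])).intervalIntegrable
  -- majorant
  set M : ℝ → ℝ := fun ζ => (c*W2 + a₁*W1)/(2*t) * ζ + t/(2*c) * ‖θ ζ‖^2 + t/(2*a₁) * ‖θ' ζ‖^2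
    with hM
  have hptw : ∀ ζ ∈ Icc (0:ℝ) z, ‖G ζ‖ ≤ M ζ := by
    intro ζ hζ
    have hζ' : ζ ∈ Icc (0:ℝ) (1/2) := ⟨hζ.1, le_trans hζ.2 hz2⟩
    have hb1 : ‖w' ζ‖^2 ≤ ζ * W2 := ptwise_aux hw' hw''c hw'0 hζ'
    have hb2 : ‖w ζ‖^2 ≤ ζ * W1 := ptwise_aux hw hw'c hw0 hζ'
    have hn : ‖G ζ‖ ≤ ‖w' ζ‖ * ‖θ ζ‖ + ‖w ζ‖ * ‖θ' ζ‖ := by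
      calc ‖G ζ‖ ≤ ‖w' ζ * (starRingEnd ℂ) (θ ζ)‖ + ‖w ζ * (starRingEnd ℂ) (θ' ζ)‖ :=
            norm_add_le _ _
        _ = ‖w' ζ‖ * ‖θ ζ‖ + ‖w ζ‖ * ‖θ' ζ‖ := by
            simp [norm_mul, RCLike.norm_conj]
    have hy1 : ‖w' ζ‖ * ‖θ ζ‖ ≤ ((c/t)*‖w' ζ‖^2 + ‖θ ζ‖^2/(c/t))/2 :=
      young_aux_s10 (div_pos hc0 ht0)
    have hy2 : ‖w ζ‖ * ‖θ' ζ‖ ≤ ((a₁/t)*‖w ζ‖^2 + ‖θ' ζ‖^2/(a₁/t))/2 :=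
      young_aux_s10 (div_pos ha₁ ht0)
    have e1 : ‖θ ζ‖^2/(c/t) = t/c * ‖θ ζ‖^2 := by field_simp
    have e2 : ‖θ' ζ‖^2/(a₁/t) = t/a₁ * ‖θ' ζ‖^2 := by field_simp
    rw [e1] at hy1; rw [e2] at hy2
    have hct : 0 ≤ c/t := le_of_lt (div_pos hc0 ht0)
    have hat : 0 ≤ a₁/t := le_of_lt (div_pos ha₁ ht0)
    have h1 : (c/t)*‖w' ζ‖^2 ≤ (c/t)*(ζ*W2) := mul_le_mul_of_nonneg_left hb1 hct
    have h2 : (a₁/t)*‖w ζ‖^2 ≤ (a₁/t)*(ζ*W1) := mul_le_mul_of_nonneg_left hb2 hat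
    have : ‖G ζ‖ ≤ ((c/t)*(ζ*W2) + t/c * ‖θ ζ‖^2)/2 + ((a₁/t)*(ζ*W1) + t/a₁ * ‖θ' ζ‖^2)/2 := by
      linarith
    calc ‖G ζ‖ ≤ ((c/t)*(ζ*W2) + t/c * ‖θ ζ‖^2)/2 + ((a₁/t)*(ζ*W1) + t/a₁ * ‖θ' ζ‖^2)/2 := this
      _ = M ζ := by rw [hM]; field_simp; ring
  -- integrability on [0,z]
  have hsubz : Icc (0:ℝ) z ⊆ Icc 0 (1/2) := Icc_subset_Icc le_rfl hz2
  have hintG : IntervalIntegrable (fun ζ => ‖G ζ‖) volume 0 z :=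
    (((hGc.mono hsubz).norm).mono (by rw [uIcc_of_le hz0])).intervalIntegrable
  have hintθ : IntervalIntegrable (fun ζ => ‖θ ζ‖^2) volume 0 z :=
    (((hθc.mono hsubz).norm.pow 2).mono (by rw [uIcc_of_le hz0])).intervalIntegrable
  have hintθ' : IntervalIntegrable (fun ζ => ‖θ' ζ‖^2) volume 0 z :=
    (((hθ'c.mono hsubz).norm.pow 2).mono (by rw [uIcc_of_le hz0])).intervalIntegrable
  have hintM : IntervalIntegrable M volume 0 z := by
    apply IntervalIntegrable.add
    apply IntervalIntegrable.add
    · exact (intervalIntegrable_id.const_mul _)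
    · exact hintθ.const_mul _
    · exact hintθ'.const_mul _
  -- the integral of the majorant
  have hMint : (∫ ζ in (0:ℝ)..z, M ζ) =
      (c*W2 + a₁*W1)/(2*t) * (z^2/2) + t/(2*c) * (∫ ζ in (0:ℝ)..z, ‖θ ζ‖^2)
        + t/(2*a₁) * (∫ ζ in (0:ℝ)..z, ‖θ' ζ‖^2) := by
    rw [hM]
    rw [intervalIntegral.integral_add (((intervalIntegrable_id).const_mul _).add
      (hintθ.const_mul _)) (hintθ'.const_mul _)]
    rw [intervalIntegral.integral_add ((intervalIntegrable_id).const_mul _) (hintθ.const_mul _)]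
    rw [intervalIntegral.integral_const_mul, intervalIntegral.integral_const_mul,
      intervalIntegral.integral_const_mul, integral_id]
    ring
  -- chain
  have hchain : ‖w z * (starRingEnd ℂ) (θ z)‖ ≤ ∫ ζ in (0:ℝ)..z, M ζ := by
    calc ‖w z * (starRingEnd ℂ) (θ z)‖ = ‖∫ x in (0:ℝ)..z, G x‖ := by rw [hftc]
      _ ≤ ∫ x in (0:ℝ)..z, ‖G x‖ := intervalIntegral.norm_integral_le_integral_norm hz0
      _ ≤ ∫ ζ in (0:ℝ)..z, M ζ := intervalIntegral.integral_mono_on hz0 hintG hintM hptw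
  have hT0m : (∫ ζ in (0:ℝ)..z, ‖θ ζ‖^2) ≤ T0 := mono_aux hθc hz0 hz2
  have hT1m : (∫ ζ in (0:ℝ)..z, ‖θ' ζ‖^2) ≤ T1 := mono_aux hθ'c hz0 hz2
  have hfin : (∫ ζ in (0:ℝ)..z, M ζ) ≤
      (z / (2 * s)) * (a₁ * W1 + (1/a₁) * T1 + c * W2 + (1/c) * T0) := by
    rw [hMint]
    have h1 : t/(2*c) * (∫ ζ in (0:ℝ)..z, ‖θ ζ‖^2) ≤ t/(2*c) * T0 :=
      mul_le_mul_of_nonneg_left hT0m (by positivity)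
    have h2 : t/(2*a₁) * (∫ ζ in (0:ℝ)..z, ‖θ' ζ‖^2) ≤ t/(2*a₁) * T1 :=
      mul_le_mul_of_nonneg_left hT1m (by positivity)
    have heq : (c*W2 + a₁*W1)/(2*t) * (z^2/2) + t/(2*c) * T0 + t/(2*a₁) * T1 =
        (z / (2 * s)) * (a₁ * W1 + (1/a₁) * T1 + c * W2 + (1/c) * T0) := by
      rw [ht]
      have hz' : z ≠ 0 := ne_of_gt hzpos
      have hs' : s ≠ 0 := ne_of_gt hs0
      have hc' : c ≠ 0 := ne_of_gt hc0
      clear_value c s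
      field_simp
      linear_combination (a₁*c*(c*W2+a₁*W1)) * hs2
    linarith
  have hcid : k^2/a₂ = 1/c := by rw [hc]; field_simp
  rw [hcid]
  calc ‖w z * (starRingEnd ℂ) (θ z)‖ ≤ ∫ ζ in (0:ℝ)..z, M ζ := hchain
    _ ≤ (z / (2 * s)) * (a₁ * W1 + (1/a₁) * T1 + c * W2 + (1/c) * T0) := hfin
    _ = (z / (2 * s)) * (a₁ * W1 + (1/a₁) * T1 + (a₂/k^2) * W2 + (1/c) * T0) := by rw [hc]
end

section
/- Let 0 < δ ≤ 1/2, γ > 0, and define σ : [0,1] → ℝ by σ(z) = −γ for z ∈ [0,δ] ∪ [1−δ, 1] and σ(z) = 0 otherwise. Let w, θ be complex-valued functions on [0,1], with w twice continuously differentiable, θ continuously differentiable, and w(0) = w(1) = 0, w'(0) = w'(1) = 0. Then for all real a₁ > 0, a₂ > 0, k > 0: ∫₀¹ 2·σ(z)·Re( w(z)·conj(θ(z)) ) dz ≥ −(γ·δ²/(2√2))·[ a₁·∫₀¹ |w'|² + (1/a₁)·∫₀¹ |θ'|² + (a₂/k²)·∫₀¹ |w''|² + (k²/a₂)·∫₀¹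 |θ|² ]. -/
set_option maxHeartbeats 1000000

open MeasureTheory intervalIntegral Set

/-- FTC for derivatives taken within `Icc 0 1`. -/
private lemma ftc_icc {f f' : ℝ → ℂ}
    (hf : ∀ z ∈ Icc (0:ℝ) 1, HasDerivWithinAt f (f' z) (Icc 0 1) z)
    (hf'c : ContinuousOn f' (Icc 0 1)) {a b : ℝ} (ha : 0 ≤ a) (hab : a ≤ b) (hb : b ≤ 1) :
    ∫ z in a..b, f' z = f b - f a := by
  apply integral_eq_sub_of_hasDeriv_right_of_le hab
  · exact fun z hz => ((hf z ⟨ha.trans hz.1, hz.2.trans hb⟩).continuousWithinAt).mono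
      (Icc_subset_Icc ha hb)
  · intro x hx
    have hx01 : x ∈ Ioo (0:ℝ) 1 := ⟨lt_of_le_of_lt ha hx.1, lt_of_lt_of_le hx.2 hb⟩
    exact (hf x (Ioo_subset_Icc_self hx01)).mono_of_mem_nhdsWithin
      (mem_nhdsWithin_of_mem_nhds (Icc_mem_nhds hx01.1 hx01.2))
  · exact (hf'c.mono (Icc_subset_Icc ha hb)).intervalIntegrable_of_Icc hab

/-- Cauchy–Schwarz with the constant function 1. -/
private lemma cs_sqrt (t : ℝ) (ht : 0 ≤ t) (f : ℝ → ℝ) (hf : ContinuousOn f (Icc 0 t))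
    (hpos : ∀ x, 0 ≤ f x) :
    ∫ x in (0:ℝ)..t, f x ≤ Real.sqrt t * Real.sqrt (∫ x in (0:ℝ)..t, f x ^ 2) := by
  have hmeas : MeasurableSet (Ioc (0:ℝ) t) := measurableSet_Ioc
  haveI : IsFiniteMeasure (volume.restrict (Ioc (0:ℝ) t)) := by
    constructor
    rw [Measure.restrict_apply_univ, Real.volume_Ioc]
    exact ENNReal.ofReal_lt_top
  obtain ⟨C, hC⟩ := (isCompact_Icc (a := (0:ℝ)) (b := t)).exists_bound_of_continuousOn hf
  have hasm : AEStronglyMeasurable f (volume.restrict (Ioc (0:ℝ) t)) :=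
    (hf.mono Ioc_subset_Icc_self).aestronglyMeasurable hmeas
  have hmem : MemLp f (ENNReal.ofReal 2) (volume.restrict (Ioc (0:ℝ) t)) := by
    apply MemLp.of_bound hasm C
    exact (ae_restrict_iff' hmeas).2 (Filter.Eventually.of_forall fun x hx =>
      hC x (Ioc_subset_Icc_self hx))
  have hmem1 : MemLp (fun _ : ℝ => (1:ℝ)) (ENNReal.ofReal 2) (volume.restrict (Ioc (0:ℝ) t)) :=
    memLp_const 1
  have hpq : Real.HolderConjugate 2 2 := Real.HolderConjugate.two_two
  have h := integral_mul_norm_le_Lp_mul_Lq (μ := volume.restrict (Ioc (0:ℝ) t)) hpq hmem hmem1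
  simp only [norm_one, mul_one, Real.norm_eq_abs, Real.one_rpow] at h
  rw [integral_of_le ht, integral_of_le ht]
  have e1 : ∀ x, |f x| = f x := fun x => abs_of_nonneg (hpos x)
  have e2 : ∀ x, |f x| ^ (2:ℝ) = f x ^ 2 := fun x => by rw [Real.rpow_two, sq_abs]
  simp only [e1, e2] at h
  have e3 : ∫ _x in Ioc (0:ℝ) t, (1:ℝ) = t := by simp [Real.volume_Ioc, ht]
  rw [e3] at h
  calc ∫ x in Ioc (0:ℝ) t, f x ≤ _ := h
    _ = Real.sqrt t * Real.sqrt (∫ x in Ioc (0:ℝ) t, f x ^ 2) := by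
        rw [Real.sqrt_eq_rpow, Real.sqrt_eq_rpow, mul_comm]; norm_num

/-- Boundary-layer estimate near `z = 0`. -/
private lemma bl_bound (δ : ℝ) (hδ0 : 0 < δ) (hδ1 : δ ≤ 1)
    (w w' w'' θ : ℝ → ℂ)
    (hw : ∀ z ∈ Icc (0:ℝ) 1, HasDerivWithinAt w (w' z) (Icc 0 1) z)
    (hw' : ∀ z ∈ Icc (0:ℝ) 1, HasDerivWithinAt w' (w'' z) (Icc 0 1) z)
    (hw''c : ContinuousOn w'' (Icc 0 1))
    (hθc : ContinuousOn θ (Icc 0 1))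
    (hw0 : w 0 = 0) (hw'0 : w' 0 = 0)
    (μ : ℝ) (hμ : 0 < μ) :
    ∫ z in (0:ℝ)..δ, 2 * (‖w z‖ * ‖θ z‖) ≤
      μ * (∫ z in (0:ℝ)..δ, ‖θ z‖^2) + (1/μ) * ((δ^4/9) * ∫ z in (0:ℝ)..δ, ‖w'' z‖^2) := by
  have hsub : Icc (0:ℝ) δ ⊆ Icc 0 1 := Icc_subset_Icc le_rfl hδ1
  have hw'c : ContinuousOn w' (Icc 0 1) := fun z hz => (hw' z hz).continuousWithinAt
  have hwc : ContinuousOn w (Icc 0 1) := fun z hz => (hw z hz).continuousWithinAt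
  set A2 := ∫ z in (0:ℝ)..δ, ‖w'' z‖^2 with hA2def
  have hA2nn : 0 ≤ A2 :=
    intervalIntegral.integral_nonneg hδ0.le (fun x _ => sq_nonneg _)
  have hw''sq_int : IntervalIntegrable (fun z => ‖w'' z‖^2) volume 0 δ :=
    (((hw''c.mono hsub).norm).pow 2).intervalIntegrable_of_Icc hδ0.le
  -- pointwise bound on w'
  have hw'bd : ∀ t ∈ Icc (0:ℝ) δ, ‖w' t‖ ≤ Real.sqrt t * Real.sqrt A2 := by
    intro t ht
    have ht1 : t ≤ 1 := ht.2.trans hδ1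
    have e : ∫ z in (0:ℝ)..t, w'' z = w' t - w' 0 := ftc_icc hw' hw''c le_rfl ht.1 ht1
    rw [hw'0, sub_zero] at e
    calc ‖w' t‖ = ‖∫ z in (0:ℝ)..t, w'' z‖ := by rw [e]
      _ ≤ ∫ z in (0:ℝ)..t, ‖w'' z‖ := norm_integral_le_integral_norm ht.1
      _ ≤ Real.sqrt t * Real.sqrt (∫ z in (0:ℝ)..t, ‖w'' z‖^2) := by
          exact cs_sqrt t ht.1 _ ((hw''c.mono (Icc_subset_Icc le_rfl ht1)).norm)
            (fun x => norm_nonneg _)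
      _ ≤ Real.sqrt t * Real.sqrt A2 := by
          apply mul_le_mul_of_nonneg_left _ (Real.sqrt_nonneg t)
          apply Real.sqrt_le_sqrt
          exact intervalIntegral.integral_mono_interval le_rfl ht.1 ht.2
            (Filter.Eventually.of_forall fun x => sq_nonneg _) hw''sq_int
  -- pointwise bound on w
  have hwbd : ∀ z ∈ Icc (0:ℝ) δ, ‖w z‖ ≤ 2/3 * (z * Real.sqrt z) * Real.sqrt A2 := by
    intro z hz
    have hz1 : z ≤ 1 := hz.2.trans hδ1
    have e : ∫ t in (0:ℝ)..z, w' t = w z - w 0 := ftc_icc hw hw'c le_rfl hz.1 hz1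
    rw [hw0, sub_zero] at e
    have hsqrtint : ∫ t in (0:ℝ)..z, Real.sqrt t = 2/3 * (z * Real.sqrt z) := by
      have : ∀ t ∈ uIcc (0:ℝ) z, Real.sqrt t = t ^ ((1:ℝ)/2) := fun t _ => Real.sqrt_eq_rpow t
      rw [intervalIntegral.integral_congr this,
        integral_rpow (Or.inl (by norm_num))]
      rw [Real.zero_rpow (by norm_num)]
      have h32 : z ^ ((1:ℝ)/2 + 1) = z ^ ((1:ℝ)/2) * z ^ (1:ℝ) :=
        Real.rpow_add' hz.1 (by norm_num)
      norm_num at h32 ⊢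
      rw [h32, ← Real.sqrt_eq_rpow]
      ring
    calc ‖w z‖ = ‖∫ t in (0:ℝ)..z, w' t‖ := by rw [e]
      _ ≤ ∫ t in (0:ℝ)..z, ‖w' t‖ := norm_integral_le_integral_norm hz.1
      _ ≤ ∫ t in (0:ℝ)..z, Real.sqrt t * Real.sqrt A2 := by
          apply intervalIntegral.integral_mono_on hz.1
          · exact ((hw'c.mono ((Icc_subset_Icc le_rfl hz1))).norm).intervalIntegrable_of_Icc hz.1
          · exact ((Real.continuous_sqrt.continuousOn).mul continuousOn_const).intervalIntegrable_of_Icc hz.1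
          · exact fun t ht => hw'bd t ⟨ht.1, ht.2.trans hz.2⟩
      _ = (∫ t in (0:ℝ)..z, Real.sqrt t) * Real.sqrt A2 := integral_mul_const _ _
      _ = 2/3 * (z * Real.sqrt z) * Real.sqrt A2 := by rw [hsqrtint]
  -- squared bound on w
  have hwsq : ∀ z ∈ Icc (0:ℝ) δ, ‖w z‖^2 ≤ 4/9 * z^3 * A2 := by
    intro z hz
    have h1 := hwbd z hz
    have h2 : (2/3 * (z * Real.sqrt z) * Real.sqrt A2)^2 = 4/9 * z^3 * A2 := by
      have e1 : Real.sqrt z ^ 2 = z := Real.sq_sqrt hz.1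
      have e2 : Real.sqrt A2 ^ 2 = A2 := Real.sq_sqrt hA2nn
      have e3 : (2/3 * (z * Real.sqrt z) * Real.sqrt A2)^2
          = 4/9 * (z^2 * Real.sqrt z ^ 2) * Real.sqrt A2 ^ 2 := by ring
      rw [e3, e1, e2]; ring
    calc ‖w z‖^2 ≤ (2/3 * (z * Real.sqrt z) * Real.sqrt A2)^2 := by
          apply sq_le_sq' _ h1
          have : 0 ≤ 2/3 * (z * Real.sqrt z) * Real.sqrt A2 :=
            mul_nonneg (mul_nonneg (by norm_num)
              (mul_nonneg hz.1 (Real.sqrt_nonneg _))) (Real.sqrt_nonneg _)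
          linarith [norm_nonneg (w z)]
      _ = 4/9 * z^3 * A2 := h2
  -- integral of ‖w‖²
  have hwint : ∫ z in (0:ℝ)..δ, ‖w z‖^2 ≤ δ^4/9 * A2 := by
    have : ∫ z in (0:ℝ)..δ, 4/9 * z^3 * A2 = δ^4/9 * A2 := by
      rw [intervalIntegral.integral_mul_const, intervalIntegral.integral_const_mul,
        integral_pow]
      ring
    rw [← this]
    apply intervalIntegral.integral_mono_on hδ0.le
    · exact (((hwc.mono hsub).norm).pow 2).intervalIntegrable_of_Icc hδ0.le
    · exact (((continuousOn_const).mul ((continuousOn_id).pow 3)).mul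
        continuousOn_const).intervalIntegrable_of_Icc hδ0.le
    · exact hwsq
  -- pointwise Young + integrate
  have hyoung : ∫ z in (0:ℝ)..δ, 2 * (‖w z‖ * ‖θ z‖) ≤
      ∫ z in (0:ℝ)..δ, (μ * ‖θ z‖^2 + (1/μ) * ‖w z‖^2) := by
    apply intervalIntegral.integral_mono_on hδ0.le
    · exact ((continuousOn_const).mul (((hwc.mono hsub).norm).mul
        ((hθc.mono hsub).norm))).intervalIntegrable_of_Icc hδ0.le
    · exact (((continuousOn_const).mul (((hθc.mono hsub).norm).pow 2)).add
        ((continuousOn_const).mul (((hwc.mono hsub).norm).pow 2))).intervalIntegrable_of_Icc hδ0.le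
    · intro z _
      rw [← sub_nonneg]
      have e : μ * ‖θ z‖^2 + (1/μ) * ‖w z‖^2 - 2 * (‖w z‖ * ‖θ z‖)
          = (μ * ‖θ z‖ - ‖w z‖)^2 / μ := by
        field_simp; ring
      rw [e]; positivity
  calc ∫ z in (0:ℝ)..δ, 2 * (‖w z‖ * ‖θ z‖)
      ≤ ∫ z in (0:ℝ)..δ, (μ * ‖θ z‖^2 + (1/μ) * ‖w z‖^2) := hyoung
    _ = μ * (∫ z in (0:ℝ)..δ, ‖θ z‖^2) + (1/μ) * (∫ z in (0:ℝ)..δ, ‖w z‖^2) := by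
        rw [intervalIntegral.integral_add, intervalIntegral.integral_const_mul,
          intervalIntegral.integral_const_mul]
        · exact ((continuousOn_const).mul (((hθc.mono hsub).norm).pow 2)).intervalIntegrable_of_Icc hδ0.le
        · exact ((continuousOn_const).mul (((hwc.mono hsub).norm).pow 2)).intervalIntegrable_of_Icc hδ0.le
    _ ≤ μ * (∫ z in (0:ℝ)..δ, ‖θ z‖^2) + (1/μ) * (δ^4/9 * A2) := by
        have : (1/μ) * (∫ z in (0:ℝ)..δ, ‖w z‖^2) ≤ (1/μ) * (δ^4/9 * A2) :=
          mul_le_mul_of_nonneg_left hwint (by positivity)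
        linarith

/-- Boundary-layer estimate near `z = 1`, by reflection. -/
private lemma bl_bound_right (δ : ℝ) (hδ0 : 0 < δ) (hδ1 : δ ≤ 1)
    (w w' w'' θ : ℝ → ℂ)
    (hw : ∀ z ∈ Icc (0:ℝ) 1, HasDerivWithinAt w (w' z) (Icc 0 1) z)
    (hw' : ∀ z ∈ Icc (0:ℝ) 1, HasDerivWithinAt w' (w'' z) (Icc 0 1) z)
    (hw''c : ContinuousOn w'' (Icc 0 1))
    (hθc : ContinuousOn θ (Icc 0 1))
    (hw1 : w 1 = 0) (hw'1 : w' 1 = 0)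
    (μ : ℝ) (hμ : 0 < μ) :
    ∫ z in (1-δ:ℝ)..1, 2 * (‖w z‖ * ‖θ z‖) ≤
      μ * (∫ z in (1-δ:ℝ)..1, ‖θ z‖^2) + (1/μ) * ((δ^4/9) * ∫ z in (1-δ:ℝ)..1, ‖w'' z‖^2) := by
  have hmap : MapsTo (fun z : ℝ => 1 - z) (Icc 0 1) (Icc 0 1) := by
    intro z hz
    simp only [mem_Icc] at hz ⊢
    constructor <;> linarith [hz.1, hz.2]
  have hrefl : ∀ z ∈ Icc (0:ℝ) 1, HasDerivWithinAt (fun z : ℝ => 1 - z) (-1) (Icc 0 1) z :=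
    fun z _ => by simpa using (hasDerivWithinAt_id z (Icc (0:ℝ) 1)).const_sub 1
  have hreflc : ContinuousOn (fun z : ℝ => 1 - z) (Icc 0 1) :=
    (continuous_const.sub continuous_id).continuousOn
  have hW : ∀ z ∈ Icc (0:ℝ) 1, HasDerivWithinAt (fun z => w (1 - z)) (-(w' (1 - z)))
      (Icc 0 1) z := by
    intro z hz
    have := HasDerivWithinAt.scomp z (hw (1-z) (hmap hz)) (hrefl z hz) hmap
    simpa [Function.comp_def] using this
  have hW' : ∀ z ∈ Icc (0:ℝ) 1, HasDerivWithinAt (fun z => -(w' (1 - z))) (w'' (1 - z))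
      (Icc 0 1) z := by
    intro z hz
    have := (HasDerivWithinAt.scomp z (hw' (1-z) (hmap hz)) (hrefl z hz) hmap).neg
    simpa [Function.comp_def, Pi.neg_def] using this
  have hW''c : ContinuousOn (fun z => w'' (1 - z)) (Icc 0 1) := hw''c.comp hreflc hmap
  have hΘc : ContinuousOn (fun z => θ (1 - z)) (Icc 0 1) := hθc.comp hreflc hmap
  have h := bl_bound δ hδ0 hδ1 (fun z => w (1-z)) (fun z => -(w' (1-z))) (fun z => w'' (1-z))
    (fun z => θ (1-z)) hW hW' hW''c hΘc (by simpa using hw1) (by simpa using hw'1) μ hμ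
  have e1 : ∫ z in (0:ℝ)..δ, 2 * (‖w (1-z)‖ * ‖θ (1-z)‖)
      = ∫ z in (1-δ:ℝ)..1, 2 * (‖w z‖ * ‖θ z‖) := by
    have := intervalIntegral.integral_comp_sub_left
      (a := (0:ℝ)) (b := δ) (fun x => 2 * (‖w x‖ * ‖θ x‖)) 1
    simpa using this
  have e2 : ∫ z in (0:ℝ)..δ, ‖θ (1-z)‖^2 = ∫ z in (1-δ:ℝ)..1, ‖θ z‖^2 := by
    have := intervalIntegral.integral_comp_sub_left
      (a := (0:ℝ)) (b := δ) (fun x => ‖θ x‖^2) 1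
    simpa using this
  have e3 : ∫ z in (0:ℝ)..δ, ‖w'' (1-z)‖^2 = ∫ z in (1-δ:ℝ)..1, ‖w'' z‖^2 := by
    have := intervalIntegral.integral_comp_sub_left
      (a := (0:ℝ)) (b := δ) (fun x => ‖w'' x‖^2) 1
    simpa using this
  rw [e1, e2, e3] at h
  exact h

/-- Estimate on the indefinite cross term of the per-mode quadratic form:
∫₀¹ 2σ·Re(w·conj θ) ≥ −(γδ²/(2√2))[a₁∫|w'|² + (1/a₁)∫|θ'|² + (a₂/k²)∫|w''|² + (k²/a₂)∫|θ|²]. -/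
theorem stmt_11 (δ γ : ℝ) (hδ0 : 0 < δ) (hδ2 : δ ≤ 1/2) (hγ : 0 < γ)
    (σ : ℝ → ℝ)
    (hσ : ∀ z ∈ Set.Icc (0:ℝ) 1, σ z = if z ≤ δ ∨ 1 - δ ≤ z then -γ else 0)
    (w w' w'' θ θ' : ℝ → ℂ)
    (hw : ∀ z ∈ Set.Icc (0:ℝ) 1, HasDerivWithinAt w (w' z) (Set.Icc 0 1) z)
    (hw' : ∀ z ∈ Set.Icc (0:ℝ) 1, HasDerivWithinAt w' (w'' z) (Set.Icc 0 1) z)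
    (hw''c : ContinuousOn w'' (Set.Icc 0 1))
    (hθ : ∀ z ∈ Set.Icc (0:ℝ) 1, HasDerivWithinAt θ (θ' z) (Set.Icc 0 1) z)
    (hθ'c : ContinuousOn θ' (Set.Icc 0 1))
    (hw0 : w 0 = 0) (hw1 : w 1 = 0) (hw'0 : w' 0 = 0) (hw'1 : w' 1 = 0)
    (a₁ a₂ k : ℝ) (ha₁ : 0 < a₁) (ha₂ : 0 < a₂) (hk : 0 < k) :
    -(γ * δ^2 / (2 * Real.sqrt 2)) *
      (a₁ * (∫ z in (0:ℝ)..1, ‖w' z‖^2)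
        + (1/a₁) * (∫ z in (0:ℝ)..1, ‖θ' z‖^2)
        + (a₂/k^2) * (∫ z in (0:ℝ)..1, ‖w'' z‖^2)
        + (k^2/a₂) * (∫ z in (0:ℝ)..1, ‖θ z‖^2))
      ≤ ∫ z in (0:ℝ)..1, 2 * σ z * (w z * starRingEnd ℂ (θ z)).re := by
  have hδ1 : δ ≤ 1 := by linarith
  have hδδ : δ ≤ 1 - δ := by linarith
  have h1δ : (0:ℝ) ≤ 1 - δ := by linarith
  have hwc : ContinuousOn w (Icc 0 1) := fun z hz => (hw z hz).continuousWithinAt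
  have hθc : ContinuousOn θ (Icc 0 1) := fun z hz => (hθ z hz).continuousWithinAt
  set R : ℝ → ℝ := fun z => (w z * starRingEnd ℂ (θ z)).re with hRdef
  have hRc : ContinuousOn R (Icc 0 1) := by
    apply Complex.continuous_re.comp_continuousOn
    exact hwc.mul (continuous_star.comp_continuousOn hθc)
  set g : ℝ → ℝ := fun z => if z ≤ δ ∨ 1 - δ ≤ z then -γ else 0 with hgdef
  set H : ℝ → ℝ := fun z => 2 * g z * R z with hHdef
  -- rewrite the integrand using hσ
  have hcongr : (∫ z in (0:ℝ)..1, 2 * σ z * R z) = ∫ z in (0:ℝ)..1, H z := by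
    apply intervalIntegral.integral_congr
    intro z hz
    rw [uIcc_of_le (by norm_num : (0:ℝ) ≤ 1)] at hz
    simp only [H, g, hσ z hz]
  -- integrability of H
  have hgm : Measurable g := by
    apply Measurable.ite _ measurable_const measurable_const
    simp only [setOf_or]
    exact (measurableSet_Iic (a := δ)).union (measurableSet_Ici (a := 1 - δ))
  obtain ⟨C, hC⟩ := (isCompact_Icc (a := (0:ℝ)) (b := 1)).exists_bound_of_continuousOn hRc
  have hHint : IntegrableOn H (Icc 0 1) volume := by
    refine ⟨((hgm.const_mul 2).aestronglyMeasurable.mul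
      (hRc.aestronglyMeasurable measurableSet_Icc)), ?_⟩
    apply MeasureTheory.HasFiniteIntegral.of_bounded (C := 2 * γ * C)
    apply (ae_restrict_iff' measurableSet_Icc).2
    apply Filter.Eventually.of_forall
    intro z hz
    have hg : |g z| ≤ γ := by
      simp only [g]
      split
      · rw [abs_neg, abs_of_nonneg hγ.le]
      · rw [abs_zero]; exact hγ.le
    have hRz : |R z| ≤ C := by simpa using hC z hz
    have hC0 : 0 ≤ C := le_trans (abs_nonneg _) hRz
    calc ‖H z‖ = 2 * (|g z| * |R z|) := by
          simp only [H, Real.norm_eq_abs, abs_mul, abs_two]; ring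
      _ ≤ 2 * (γ * C) := by
          apply mul_le_mul_of_nonneg_left _ (by norm_num)
          exact mul_le_mul hg hRz (abs_nonneg _) hγ.le
      _ = 2 * γ * C := by ring
  have hHI : ∀ a b : ℝ, 0 ≤ a → a ≤ b → b ≤ 1 → IntervalIntegrable H volume a b := by
    intro a b ha hab hb
    apply IntervalIntegrable.mono_set
      ((intervalIntegrable_iff_integrableOn_Icc_of_le (by norm_num : (0:ℝ) ≤ 1)).2 hHint)
    rw [uIcc_of_le hab, uIcc_of_le (by norm_num : (0:ℝ) ≤ 1)]
    exact Icc_subset_Icc ha hb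
  -- split the integral
  have hsplit : (∫ z in (0:ℝ)..1, H z)
      = (∫ z in (0:ℝ)..δ, H z) + (∫ z in δ..(1-δ), H z) + ∫ z in (1-δ)..1, H z := by
    have t1 := intervalIntegral.integral_add_adjacent_intervals
      (hHI 0 δ le_rfl hδ0.le hδ1) (hHI δ (1-δ) hδ0.le hδδ (by linarith))
    have t2 := intervalIntegral.integral_add_adjacent_intervals
      ((hHI 0 δ le_rfl hδ0.le hδ1).trans (hHI δ (1-δ) hδ0.le hδδ (by linarith)))
      (hHI (1-δ) 1 h1δ (by linarith) le_rfl)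
    linarith
  -- evaluate the three pieces
  have hmid : (∫ z in δ..(1-δ), H z) = 0 := by
    apply intervalIntegral.integral_zero_ae
    have hne : ∀ᵐ x : ℝ ∂volume, x ≠ 1 - δ := by
      rw [MeasureTheory.ae_iff]
      convert Real.volume_singleton (a := 1 - δ) using 2
      ext x; simp
    filter_upwards [hne] with x hx hxI
    rw [uIoc_of_le hδδ] at hxI
    have hcond : ¬(x ≤ δ ∨ 1 - δ ≤ x) := by
      push_neg
      exact ⟨hxI.1, lt_of_le_of_ne hxI.2 hx⟩
    simp only [H, g, if_neg hcond, mul_zero, zero_mul]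
  have hleft : (∫ z in (0:ℝ)..δ, H z) = (-2*γ) * ∫ z in (0:ℝ)..δ, R z := by
    rw [← intervalIntegral.integral_const_mul]
    apply intervalIntegral.integral_congr
    intro z hz
    rw [uIcc_of_le hδ0.le] at hz
    simp only [H, g, if_pos (Or.inl hz.2)]
    ring
  have hright : (∫ z in (1-δ)..1, H z) = (-2*γ) * ∫ z in (1-δ)..1, R z := by
    rw [← intervalIntegral.integral_const_mul]
    apply intervalIntegral.integral_congr
    intro z hz
    rw [uIcc_of_le (by linarith : 1 - δ ≤ (1:ℝ))] at hz
    simp only [H, g, if_pos (Or.inr hz.1)]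
    ring
  -- bound R by ‖w‖‖θ‖
  have hRle : ∀ z, R z ≤ ‖w z‖ * ‖θ z‖ := by
    intro z
    have h1 := Complex.re_le_norm (w z * starRingEnd ℂ (θ z))
    rw [norm_mul, Complex.norm_conj] at h1
    show (w z * starRingEnd ℂ (θ z)).re ≤ _
    exact h1
  have hNc : ContinuousOn (fun z => ‖w z‖ * ‖θ z‖) (Icc 0 1) := hwc.norm.mul hθc.norm
  have hIL : (∫ z in (0:ℝ)..δ, R z) ≤ ∫ z in (0:ℝ)..δ, ‖w z‖ * ‖θ z‖ := by
    apply intervalIntegral.integral_mono_on hδ0.le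
    · exact (hRc.mono (Icc_subset_Icc le_rfl hδ1)).intervalIntegrable_of_Icc hδ0.le
    · exact (hNc.mono (Icc_subset_Icc le_rfl hδ1)).intervalIntegrable_of_Icc hδ0.le
    · exact fun z _ => hRle z
  have hIR : (∫ z in (1-δ)..1, R z) ≤ ∫ z in (1-δ)..1, ‖w z‖ * ‖θ z‖ := by
    apply intervalIntegral.integral_mono_on (by linarith : 1 - δ ≤ (1:ℝ))
    · exact (hRc.mono (Icc_subset_Icc h1δ le_rfl)).intervalIntegrable_of_Icc (by linarith)
    · exact (hNc.mono (Icc_subset_Icc h1δ le_rfl)).intervalIntegrable_of_Icc (by linarith)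
    · exact fun z _ => hRle z
  -- the boundary-layer estimates
  set μ₀ : ℝ := δ^2 * k^2 / (3 * a₂) with hμ₀def
  have hμ₀ : 0 < μ₀ := by positivity
  set B₀ := ∫ z in (0:ℝ)..δ, ‖θ z‖^2 with hB₀
  set B₁ := ∫ z in (1-δ)..1, ‖θ z‖^2 with hB₁
  set A₀ := ∫ z in (0:ℝ)..δ, ‖w'' z‖^2 with hA₀
  set A₁ := ∫ z in (1-δ)..1, ‖w'' z‖^2 with hA₁
  have hbl := bl_bound δ hδ0 hδ1 w w' w'' θ hw hw' hw''c hθc hw0 hw'0 μ₀ hμ₀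
  have hbr := bl_bound_right δ hδ0 hδ1 w w' w'' θ hw hw' hw''c hθc hw1 hw'1 μ₀ hμ₀
  have hμeq : ∀ B A : ℝ, μ₀ * B + (1/μ₀) * ((δ^4/9) * A)
      = δ^2/3 * ((k^2/a₂) * B + (a₂/k^2) * A) := by
    intro B A
    rw [hμ₀def]
    field_simp
    ring
  set JL := ∫ z in (0:ℝ)..δ, ‖w z‖ * ‖θ z‖ with hJL
  set JR := ∫ z in (1-δ)..1, ‖w z‖ * ‖θ z‖ with hJR
  have h2JL : (∫ z in (0:ℝ)..δ, 2 * (‖w z‖ * ‖θ z‖)) = 2 * JL :=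
    intervalIntegral.integral_const_mul 2 _
  have h2JR : (∫ z in (1-δ)..1, 2 * (‖w z‖ * ‖θ z‖)) = 2 * JR :=
    intervalIntegral.integral_const_mul 2 _
  rw [h2JL, hμeq B₀ A₀] at hbl
  rw [h2JR, hμeq B₁ A₁] at hbr
  -- comparison of boundary-layer integrals with full integrals
  set T₀ := ∫ z in (0:ℝ)..1, ‖θ z‖^2 with hT₀
  set W₂ := ∫ z in (0:ℝ)..1, ‖w'' z‖^2 with hW₂
  have hsq_int : ∀ (f : ℝ → ℂ), ContinuousOn f (Icc 0 1) →
      ∀ a b : ℝ, 0 ≤ a → a ≤ b → b ≤ 1 →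
      IntervalIntegrable (fun z => ‖f z‖^2) volume a b := by
    intro f hf a b ha hab hb
    exact (((hf.mono (Icc_subset_Icc ha hb)).norm).pow 2).intervalIntegrable_of_Icc hab
  have hcomp : ∀ (f : ℝ → ℂ), ContinuousOn f (Icc 0 1) →
      (∫ z in (0:ℝ)..δ, ‖f z‖^2) + (∫ z in (1-δ)..1, ‖f z‖^2) ≤ ∫ z in (0:ℝ)..1, ‖f z‖^2 := by
    intro f hf
    have t1 := intervalIntegral.integral_add_adjacent_intervals
      (hsq_int f hf 0 δ le_rfl hδ0.le hδ1) (hsq_int f hf δ (1-δ) hδ0.le hδδ (by linarith))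
    have t2 := intervalIntegral.integral_add_adjacent_intervals
      ((hsq_int f hf 0 δ le_rfl hδ0.le hδ1).trans
        (hsq_int f hf δ (1-δ) hδ0.le hδδ (by linarith)))
      (hsq_int f hf (1-δ) 1 h1δ (by linarith) le_rfl)
    have hm : 0 ≤ ∫ z in δ..(1-δ), ‖f z‖^2 :=
      intervalIntegral.integral_nonneg hδδ (fun x _ => sq_nonneg _)
    linarith
  have hBcomp : B₀ + B₁ ≤ T₀ := hcomp θ hθc
  have hAcomp : A₀ + A₁ ≤ W₂ := hcomp w'' hw''c
  have hB₀0 : 0 ≤ B₀ := intervalIntegral.integral_nonneg hδ0.le (fun x _ => sq_nonneg _)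
  have hB₁0 : 0 ≤ B₁ := intervalIntegral.integral_nonneg (by linarith) (fun x _ => sq_nonneg _)
  have hA₀0 : 0 ≤ A₀ := intervalIntegral.integral_nonneg hδ0.le (fun x _ => sq_nonneg _)
  have hA₁0 : 0 ≤ A₁ := intervalIntegral.integral_nonneg (by linarith) (fun x _ => sq_nonneg _)
  have hW₁0 : 0 ≤ ∫ z in (0:ℝ)..1, ‖w' z‖^2 :=
    intervalIntegral.integral_nonneg (by norm_num) (fun x _ => sq_nonneg _)
  have hT₁0 : 0 ≤ ∫ z in (0:ℝ)..1, ‖θ' z‖^2 :=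
    intervalIntegral.integral_nonneg (by norm_num) (fun x _ => sq_nonneg _)
  -- abbreviations for targets
  set Q : ℝ := (k^2/a₂) * (B₀ + B₁) + (a₂/k^2) * (A₀ + A₁) with hQdef
  set S : ℝ := a₁ * (∫ z in (0:ℝ)..1, ‖w' z‖^2) + (1/a₁) * (∫ z in (0:ℝ)..1, ‖θ' z‖^2)
      + (a₂/k^2) * W₂ + (k^2/a₂) * T₀ with hSdef
  have hQ0 : 0 ≤ Q := by
    apply add_nonneg <;> apply mul_nonneg (by positivity) <;> linarith
  have hQS : Q ≤ S := by
    have h1 : (k^2/a₂) * (B₀ + B₁) ≤ (k^2/a₂) * T₀ :=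
      mul_le_mul_of_nonneg_left hBcomp (by positivity)
    have h2 : (a₂/k^2) * (A₀ + A₁) ≤ (a₂/k^2) * W₂ :=
      mul_le_mul_of_nonneg_left hAcomp (by positivity)
    have h3 : 0 ≤ a₁ * (∫ z in (0:ℝ)..1, ‖w' z‖^2) := mul_nonneg ha₁.le hW₁0
    have h4 : 0 ≤ (1/a₁) * (∫ z in (0:ℝ)..1, ‖θ' z‖^2) := mul_nonneg (by positivity) hT₁0
    rw [hQdef, hSdef]; linarith
  -- numeric step with √2
  set s : ℝ := Real.sqrt 2 with hs
  have hs0 : 0 < s := Real.sqrt_pos.mpr (by norm_num)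
  have hs2 : s^2 = 2 := Real.sq_sqrt (by norm_num)
  have hs3 : 2 * s ≤ 3 := by
    have h32 : s ≤ 3/2 := by
      rw [hs]
      calc Real.sqrt 2 ≤ Real.sqrt ((3/2)^2) := Real.sqrt_le_sqrt (by norm_num)
        _ = 3/2 := Real.sqrt_sq (by norm_num)
    linarith
  have key0 : (1:ℝ)/3 ≤ 1/(2*s) := by
    rw [div_le_div_iff₀ (by norm_num) (by positivity)]
    linarith
  have key1 : γ * δ^2 * (1/3) * Q ≤ γ * δ^2 * (1/(2*s)) * Q := by
    apply mul_le_mul_of_nonneg_right _ hQ0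
    exact mul_le_mul_of_nonneg_left key0 (by positivity)
  have key2 : γ * δ^2 * (1/(2*s)) * Q ≤ γ * δ^2 * (1/(2*s)) * S :=
    mul_le_mul_of_nonneg_left hQS (by positivity)
  -- put everything together
  have hbig : -(γ * (δ^2/3) * Q) ≤ ∫ z in (0:ℝ)..1, H z := by
    rw [hsplit, hmid, hleft, hright]
    have m1 : (-2*γ) * JL ≤ (-2*γ) * (∫ z in (0:ℝ)..δ, R z) := by
      apply mul_le_mul_of_nonpos_left hIL (by linarith)
    have m2 : (-2*γ) * JR ≤ (-2*γ) * (∫ z in (1-δ)..1, R z) := by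
      apply mul_le_mul_of_nonpos_left hIR (by linarith)
    have m3 : γ * (2*JL) ≤ γ * (δ^2/3 * ((k^2/a₂) * B₀ + (a₂/k^2) * A₀)) :=
      mul_le_mul_of_nonneg_left hbl hγ.le
    have m4 : γ * (2*JR) ≤ γ * (δ^2/3 * ((k^2/a₂) * B₁ + (a₂/k^2) * A₁)) :=
      mul_le_mul_of_nonneg_left hbr hγ.le
    have e : γ * (δ^2/3 * ((k^2/a₂) * B₀ + (a₂/k^2) * A₀))
        + γ * (δ^2/3 * ((k^2/a₂) * B₁ + (a₂/k^2) * A₁)) = γ * (δ^2/3) * Q := by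
      rw [hQdef]; ring
    linarith [m1, m2, m3, m4, e]
  rw [hcongr]
  have efinal1 : -(γ * δ^2 / (2 * s)) * S = -(γ * δ^2 * (1/(2*s)) * S) := by ring
  have efinal2 : -(γ * (δ^2/3) * Q) = -(γ * δ^2 * (1/3) * Q) := by ring
  calc -(γ * δ^2 / (2 * s)) * S ≤ -(γ * (δ^2/3) * Q) := by
        rw [efinal1, efinal2]; linarith
    _ ≤ _ := hbig
end

section
/- Let w, θ be complex-valued functions on [0,1], with w twice continuously differentiable, θ continuously differentiable, and w(0) = w(1) = 0, w'(0) = w'(1) = 0. Then for every δ with 0 < δ ≤ 1/2 and all real p > 0, q > 0, k > 0: ∫₀^δ |w·conj(θ)| + ∫_{1−δ}^1 |w·conj(θ)| ≤ (δ²/(4√2))·[ p·∫₀¹ |w'|² + (1/p)·∫₀¹ |θ'|² + (q/k²)·∫₀¹ |w''|² + (k²/q)·∫₀¹ |θ|² ]. -/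
open MeasureTheory intervalIntegral Set

/-- Cauchy–Schwarz for interval integrals of continuous functions. -/
lemma cs_interval {f g : ℝ → ℝ} {a b : ℝ} (hab : a ≤ b)
    (hf : ContinuousOn f (Set.Icc a b)) (hg : ContinuousOn g (Set.Icc a b))
    (hC0 : 0 ≤ ∫ x in a..b, f x * g x) :
    (∫ x in a..b, f x * g x) ≤
      Real.sqrt (∫ x in a..b, f x ^ 2) * Real.sqrt (∫ x in a..b, g x ^ 2) := by
  have hu : Set.uIcc a b = Set.Icc a b := Set.uIcc_of_le hab
  have hif : IntervalIntegrable (fun x => f x ^ 2) volume a b :=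
    ((hf.pow 2).mono hu.subset).intervalIntegrable
  have hig : IntervalIntegrable (fun x => g x ^ 2) volume a b :=
    ((hg.pow 2).mono hu.subset).intervalIntegrable
  have hifg : IntervalIntegrable (fun x => f x * g x) volume a b :=
    ((hf.mul hg).mono hu.subset).intervalIntegrable
  set A := ∫ x in a..b, f x ^ 2 with hA
  set B := ∫ x in a..b, g x ^ 2 with hB
  set C := ∫ x in a..b, f x * g x with hC
  have hA0 : 0 ≤ A := intervalIntegral.integral_nonneg hab (fun x _ => sq_nonneg _)
  have hB0 : 0 ≤ B := intervalIntegral.integral_nonneg hab (fun x _ => sq_nonneg _)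
  have key : ∀ t : ℝ, 0 ≤ A * (t * t) + (-2 * C) * t + B := by
    intro t
    have h1 : 0 ≤ ∫ x in a..b, (t * f x - g x) ^ 2 :=
      intervalIntegral.integral_nonneg hab (fun x _ => sq_nonneg _)
    have h2 : (∫ x in a..b, (t * f x - g x) ^ 2)
        = t ^ 2 * A - 2 * t * C + B := by
      have : ∀ x : ℝ, (t * f x - g x) ^ 2
          = t ^ 2 * f x ^ 2 - 2 * t * (f x * g x) + g x ^ 2 := fun x => by ring
      simp_rw [this]
      rw [intervalIntegral.integral_add (((hif.const_mul _).sub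
        (hifg.const_mul _))) hig,
        intervalIntegral.integral_sub (hif.const_mul _) (hifg.const_mul _),
        intervalIntegral.integral_const_mul, intervalIntegral.integral_const_mul]
    nlinarith [h1, h2]
  have hdisc : discrim A (-2 * C) B ≤ 0 := discrim_le_zero key
  rw [discrim] at hdisc
  have hC2 : C ^ 2 ≤ A * B := by nlinarith [hdisc]
  calc C ≤ |C| := le_abs_self C
       _ = Real.sqrt (C ^ 2) := (Real.sqrt_sq_eq_abs C).symm
       _ ≤ Real.sqrt (A * B) := Real.sqrt_le_sqrt hC2
       _ = Real.sqrt A * Real.sqrt B := Real.sqrt_mul hA0 _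

lemma ftc01 {f f' : ℝ → ℂ}
    (hf : ∀ z ∈ Set.Icc (0:ℝ) 1, HasDerivWithinAt f (f' z) (Set.Icc 0 1) z)
    (hf'c : ContinuousOn f' (Set.Icc 0 1)) {z : ℝ} (hz : z ∈ Set.Icc (0:ℝ) 1) :
    ∫ s in (0:ℝ)..z, f' s = f z - f 0 := by
  have hfc : ContinuousOn f (Set.Icc 0 1) := fun x hx => (hf x hx).continuousWithinAt
  refine intervalIntegral.integral_eq_sub_of_hasDeriv_right_of_le hz.1
    (hfc.mono (Set.Icc_subset_Icc le_rfl hz.2)) (fun x hx => ?_) ?_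
  · exact ((hf x ⟨hx.1.le, hx.2.le.trans hz.2⟩).hasDerivAt
      (Icc_mem_nhds hx.1 (hx.2.trans_le hz.2))).hasDerivWithinAt
  · exact ((hf'c.mono (Set.Icc_subset_Icc le_rfl hz.2)).mono
      (Set.uIcc_of_le hz.1).subset).intervalIntegrable

lemma integral_sqrt_eq {z : ℝ} (hz : 0 ≤ z) :
    ∫ s in (0:ℝ)..z, Real.sqrt s = (2/3) * (z * Real.sqrt z) := by
  have : ∫ s in (0:ℝ)..z, Real.sqrt s
      = (2/3) * (z * Real.sqrt z) - (2/3) * (0 * Real.sqrt 0) := by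
    refine intervalIntegral.integral_eq_sub_of_hasDeriv_right_of_le
      (f := fun s => (2/3) * (s * Real.sqrt s)) (f' := Real.sqrt) hz
      (Continuous.continuousOn (by fun_prop)) (fun x hx => ?_) ?_
    · have hx0 : 0 < x := hx.1
      have hs : Real.sqrt x ≠ 0 := (Real.sqrt_pos.mpr hx0).ne'
      have h := (((hasDerivAt_id x).mul (Real.hasDerivAt_sqrt hx0.ne')).const_mul
        ((2:ℝ)/3)).hasDerivWithinAt (s := Set.Ioi x)
      convert h using 1
      case e'_8 => rfl
      have hxx : Real.sqrt x * Real.sqrt x = x := Real.mul_self_sqrt hx0.le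
      field_simp
      simp only [id]
      nlinarith [hxx]
    · exact (Real.continuous_sqrt.continuousOn).intervalIntegrable
  simpa using this

lemma layer (w w' w'' θ : ℝ → ℂ) (δ : ℝ) (hδ0 : 0 ≤ δ) (hδ1 : δ ≤ 1)
    (hw : ∀ z ∈ Set.Icc (0:ℝ) 1, HasDerivWithinAt w (w' z) (Set.Icc 0 1) z)
    (hw' : ∀ z ∈ Set.Icc (0:ℝ) 1, HasDerivWithinAt w' (w'' z) (Set.Icc 0 1) z)
    (hw''c : ContinuousOn w'' (Set.Icc 0 1)) (hθc : ContinuousOn θ (Set.Icc 0 1))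
    (hw0 : w 0 = 0) (hw'0 : w' 0 = 0) :
    ∫ z in (0:ℝ)..δ, ‖w z * (starRingEnd ℂ) (θ z)‖ ≤
      (δ^2/3) * Real.sqrt (∫ z in (0:ℝ)..δ, ‖w'' z‖^2)
        * Real.sqrt (∫ z in (0:ℝ)..δ, ‖θ z‖^2) := by
  have hIccδ : Set.Icc (0:ℝ) δ ⊆ Set.Icc 0 1 := Set.Icc_subset_Icc le_rfl hδ1
  have hw'c : ContinuousOn w' (Set.Icc (0:ℝ) 1) := fun x hx => (hw' x hx).continuousWithinAt
  have hwc : ContinuousOn w (Set.Icc (0:ℝ) 1) := fun x hx => (hw x hx).continuousWithinAt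
  set Y := Real.sqrt (∫ z in (0:ℝ)..δ, ‖w'' z‖^2) with hYdef
  set Θ := Real.sqrt (∫ z in (0:ℝ)..δ, ‖θ z‖^2) with hΘdef
  have hY0 : 0 ≤ Y := Real.sqrt_nonneg _
  have hΘ0 : 0 ≤ Θ := Real.sqrt_nonneg _
  -- step 1 : pointwise bound on w'
  have bound1 : ∀ s ∈ Set.Icc (0:ℝ) δ, ‖w' s‖ ≤ Real.sqrt s * Y := by
    intro s hs
    have hs1 : s ∈ Set.Icc (0:ℝ) 1 := hIccδ hs
    have h1 : w' s = ∫ t in (0:ℝ)..s, w'' t := by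
      rw [ftc01 hw' hw''c hs1, hw'0, sub_zero]
    have h2 : ∫ t in (0:ℝ)..s, ‖w'' t‖ = ∫ t in (0:ℝ)..s, ‖w'' t‖ * 1 := by simp
    have h3 : (∫ t in (0:ℝ)..s, ‖w'' t‖ * 1) ≤
        Real.sqrt (∫ t in (0:ℝ)..s, ‖w'' t‖^2) * Real.sqrt (∫ t in (0:ℝ)..s, (1:ℝ)^2) := by
      refine cs_interval hs.1 ((hw''c.mono (Set.Icc_subset_Icc le_rfl hs1.2)).norm)
        continuousOn_const ?_
      exact intervalIntegral.integral_nonneg hs.1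
        (fun x _ => by positivity)
    have h4 : Real.sqrt (∫ t in (0:ℝ)..s, ‖w'' t‖^2) ≤ Y := by
      refine Real.sqrt_le_sqrt (intervalIntegral.integral_mono_interval le_rfl hs.1 hs.2
        (Filter.Eventually.of_forall (fun x => by positivity)) ?_)
      exact ((hw''c.norm.pow 2).mono
        ((Set.uIcc_of_le hδ0).subset.trans hIccδ)).intervalIntegrable
    have h5 : Real.sqrt (∫ t in (0:ℝ)..s, (1:ℝ)^2) = Real.sqrt s := by simp
    calc ‖w' s‖ = ‖∫ t in (0:ℝ)..s, w'' t‖ := by rw [h1]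
      _ ≤ ∫ t in (0:ℝ)..s, ‖w'' t‖ := intervalIntegral.norm_integral_le_integral_norm hs.1
      _ ≤ Real.sqrt (∫ t in (0:ℝ)..s, ‖w'' t‖^2) * Real.sqrt (∫ t in (0:ℝ)..s, (1:ℝ)^2) :=
          h2 ▸ h3
      _ ≤ Y * Real.sqrt s := by rw [h5]; exact mul_le_mul_of_nonneg_right h4 (Real.sqrt_nonneg _)
      _ = Real.sqrt s * Y := mul_comm _ _
  -- step 2 : pointwise bound on w
  have bound2 : ∀ z ∈ Set.Icc (0:ℝ) δ, ‖w z‖ ≤ (2/3) * (z * Real.sqrt z) * Y := by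
    intro z hz
    have hz1 : z ∈ Set.Icc (0:ℝ) 1 := hIccδ hz
    have h1 : w z = ∫ s in (0:ℝ)..z, w' s := by
      rw [ftc01 hw hw'c hz1, hw0, sub_zero]
    have h2 : (∫ s in (0:ℝ)..z, ‖w' s‖) ≤ ∫ s in (0:ℝ)..z, Real.sqrt s * Y := by
      refine intervalIntegral.integral_mono_on hz.1 ?_ ?_ ?_
      · exact ((hw'c.norm.mono (Set.Icc_subset_Icc le_rfl hz1.2)).mono
          (Set.uIcc_of_le hz.1).subset).intervalIntegrable
      · exact ((Real.continuous_sqrt.mul continuous_const).continuousOn).intervalIntegrable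
      · exact fun s hs => bound1 s ⟨hs.1, hs.2.trans hz.2⟩
    have h3 : (∫ s in (0:ℝ)..z, Real.sqrt s * Y) = (2/3) * (z * Real.sqrt z) * Y := by
      rw [intervalIntegral.integral_mul_const, integral_sqrt_eq hz.1]
    calc ‖w z‖ = ‖∫ s in (0:ℝ)..z, w' s‖ := by rw [h1]
      _ ≤ ∫ s in (0:ℝ)..z, ‖w' s‖ := intervalIntegral.norm_integral_le_integral_norm hz.1
      _ ≤ (2/3) * (z * Real.sqrt z) * Y := h3 ▸ h2
  -- step 3 : main estimate
  have hθcδ : ContinuousOn (fun z => ‖θ z‖) (Set.Icc (0:ℝ) δ) := (hθc.mono hIccδ).norm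
  have hint1 : (∫ z in (0:ℝ)..δ, ‖w z * (starRingEnd ℂ) (θ z)‖)
      = ∫ z in (0:ℝ)..δ, ‖w z‖ * ‖θ z‖ := by
    simp [norm_mul]
  have h6 : (∫ z in (0:ℝ)..δ, ‖w z‖ * ‖θ z‖)
      ≤ ∫ z in (0:ℝ)..δ, ((2/3) * Y) * ((z * Real.sqrt z) * ‖θ z‖) := by
    refine intervalIntegral.integral_mono_on hδ0 ?_ ?_ ?_
    · exact (((hwc.mono hIccδ).norm.mul hθcδ).mono (Set.uIcc_of_le hδ0).subset).intervalIntegrable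
    · exact ((((continuous_id.mul Real.continuous_sqrt).continuousOn).mul hθcδ).const_smul
        ((2:ℝ)/3 * Y)).mono (Set.uIcc_of_le hδ0).subset |>.intervalIntegrable
    · intro z hz
      have := mul_le_mul_of_nonneg_right (bound2 z hz) (norm_nonneg (θ z))
      calc ‖w z‖ * ‖θ z‖ ≤ (2/3) * (z * Real.sqrt z) * Y * ‖θ z‖ := this
        _ = ((2/3) * Y) * ((z * Real.sqrt z) * ‖θ z‖) := by ring
  have h7 : (∫ z in (0:ℝ)..δ, ((2/3) * Y) * ((z * Real.sqrt z) * ‖θ z‖))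
      = ((2/3) * Y) * ∫ z in (0:ℝ)..δ, (z * Real.sqrt z) * ‖θ z‖ :=
    intervalIntegral.integral_const_mul _ _
  have h8 : (∫ z in (0:ℝ)..δ, (z * Real.sqrt z) * ‖θ z‖)
      ≤ Real.sqrt (∫ z in (0:ℝ)..δ, (z * Real.sqrt z)^2) * Θ := by
    refine cs_interval hδ0 ((continuous_id.mul Real.continuous_sqrt).continuousOn) hθcδ ?_
    exact intervalIntegral.integral_nonneg hδ0 (fun x hx =>
      mul_nonneg (mul_nonneg hx.1 (Real.sqrt_nonneg _)) (norm_nonneg _))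
  have h9 : Real.sqrt (∫ z in (0:ℝ)..δ, (z * Real.sqrt z)^2) = δ^2/2 := by
    have e1 : (∫ z in (0:ℝ)..δ, (z * Real.sqrt z)^2) = ∫ z in (0:ℝ)..δ, z^3 := by
      refine intervalIntegral.integral_congr (fun z hz => ?_)
      rw [Set.uIcc_of_le hδ0] at hz
      rw [mul_pow, Real.sq_sqrt hz.1]; ring
    have h9' : (∫ z in (0:ℝ)..δ, z^3) = (δ^2/2)^2 := by
      rw [integral_pow]; norm_num; ring
    rw [e1, h9', Real.sqrt_sq (by positivity)]
  calc (∫ z in (0:ℝ)..δ, ‖w z * (starRingEnd ℂ) (θ z)‖)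
      = ∫ z in (0:ℝ)..δ, ‖w z‖ * ‖θ z‖ := hint1
    _ ≤ ((2/3) * Y) * ∫ z in (0:ℝ)..δ, (z * Real.sqrt z) * ‖θ z‖ := by rw [← h7]; exact h6
    _ ≤ ((2/3) * Y) * (Real.sqrt (∫ z in (0:ℝ)..δ, (z * Real.sqrt z)^2) * Θ) := by
        exact mul_le_mul_of_nonneg_left h8 (by positivity)
    _ = (δ^2/3) * Y * Θ := by rw [h9]; ring



/-- Boundary-layer estimate: for w = w' = 0 at z = 0,1 and 0 < δ ≤ 1/2,
∫₀^δ |w·conj θ| + ∫_{1−δ}^1 |w·conj θ|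
  ≤ (δ²/(4√2))[p∫₀¹|w'|² + (1/p)∫₀¹|θ'|² + (q/k²)∫₀¹|w''|² + (k²/q)∫₀¹|θ|²]. -/
theorem stmt_12 (w w' w'' θ θ' : ℝ → ℂ)
    (hw : ∀ z ∈ Set.Icc (0:ℝ) 1, HasDerivWithinAt w (w' z) (Set.Icc 0 1) z)
    (hw' : ∀ z ∈ Set.Icc (0:ℝ) 1, HasDerivWithinAt w' (w'' z) (Set.Icc 0 1) z)
    (hw''c : ContinuousOn w'' (Set.Icc 0 1))
    (hθ : ∀ z ∈ Set.Icc (0:ℝ) 1, HasDerivWithinAt θ (θ' z) (Set.Icc 0 1) z)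
    (hθ'c : ContinuousOn θ' (Set.Icc 0 1))
    (hw0 : w 0 = 0) (hw1 : w 1 = 0) (hw'0 : w' 0 = 0) (hw'1 : w' 1 = 0)
    (δ : ℝ) (hδ0 : 0 < δ) (hδ2 : δ ≤ 1/2)
    (p q k : ℝ) (hp : 0 < p) (hq : 0 < q) (hk : 0 < k) :
    (∫ z in (0:ℝ)..δ, ‖w z * starRingEnd ℂ (θ z)‖)
      + (∫ z in (1-δ)..(1:ℝ), ‖w z * starRingEnd ℂ (θ z)‖)
    ≤ (δ^2 / (4 * Real.sqrt 2)) *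
      (p * (∫ z in (0:ℝ)..1, ‖w' z‖^2)
        + (1/p) * (∫ z in (0:ℝ)..1, ‖θ' z‖^2)
        + (q/k^2) * (∫ z in (0:ℝ)..1, ‖w'' z‖^2)
        + (k^2/q) * (∫ z in (0:ℝ)..1, ‖θ z‖^2)) := by
  have hδ1 : δ ≤ 1 := by linarith
  have hθc : ContinuousOn θ (Set.Icc (0:ℝ) 1) := fun x hx => (hθ x hx).continuousWithinAt
  -- first layer
  have L1 := layer w w' w'' θ δ hδ0.le hδ1 hw hw' hw''c hθc hw0 hw'0
  -- reflection map
  have hmap : Set.MapsTo (fun z : ℝ => 1 - z) (Set.Icc 0 1) (Set.Icc 0 1) := by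
    intro z hz
    simp only [Set.mem_Icc] at hz ⊢
    exact ⟨by linarith, by linarith⟩
  have hneg : ∀ z ∈ Set.Icc (0:ℝ) 1,
      HasDerivWithinAt (fun z : ℝ => 1 - z) (-1) (Set.Icc 0 1) z := fun z hz =>
    (hasDerivWithinAt_id z _).const_sub 1
  have hW : ∀ z ∈ Set.Icc (0:ℝ) 1,
      HasDerivWithinAt (fun z => w (1 - z)) (-w' (1 - z)) (Set.Icc 0 1) z := by
    intro z hz
    have := (hw (1 - z) (hmap hz)).scomp z (hneg z hz) hmap
    simpa [Function.comp_def] using this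
  have hW' : ∀ z ∈ Set.Icc (0:ℝ) 1,
      HasDerivWithinAt (fun z => -w' (1 - z)) (w'' (1 - z)) (Set.Icc 0 1) z := by
    intro z hz
    have := ((hw' (1 - z) (hmap hz)).scomp z (hneg z hz) hmap).neg
    simpa [Function.comp_def, Pi.neg_def] using this
  have hcont1z : ContinuousOn (fun z : ℝ => 1 - z) (Set.Icc (0:ℝ) 1) :=
    (continuous_const.sub continuous_id).continuousOn
  have L2 := layer (fun z => w (1 - z)) (fun z => -w' (1 - z)) (fun z => w'' (1 - z))
    (fun z => θ (1 - z)) δ hδ0.le hδ1 hW hW' (hw''c.comp hcont1z hmap)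
    (hθc.comp hcont1z hmap) (by simpa using hw1) (by simpa using hw'1)
  -- rewrite reflected integrals
  have e1 : (∫ z in (0:ℝ)..δ, ‖w (1 - z) * starRingEnd ℂ (θ (1 - z))‖)
      = ∫ z in (1-δ)..(1:ℝ), ‖w z * starRingEnd ℂ (θ z)‖ := by
    simpa using intervalIntegral.integral_comp_sub_left
      (a := 0) (b := δ) (fun z => ‖w z * starRingEnd ℂ (θ z)‖) 1
  have e2 : (∫ z in (0:ℝ)..δ, ‖w'' (1 - z)‖^2) = ∫ z in (1-δ)..(1:ℝ), ‖w'' z‖^2 := by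
    simpa using intervalIntegral.integral_comp_sub_left
      (a := 0) (b := δ) (fun z => ‖w'' z‖^2) 1
  have e3 : (∫ z in (0:ℝ)..δ, ‖θ (1 - z)‖^2) = ∫ z in (1-δ)..(1:ℝ), ‖θ z‖^2 := by
    simpa using intervalIntegral.integral_comp_sub_left
      (a := 0) (b := δ) (fun z => ‖θ z‖^2) 1
  rw [e1, e2, e3] at L2
  -- abbreviations
  set a := Real.sqrt (∫ z in (0:ℝ)..δ, ‖w'' z‖^2) with ha
  set b := Real.sqrt (∫ z in (0:ℝ)..δ, ‖θ z‖^2) with hb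
  set c := Real.sqrt (∫ z in (1-δ)..(1:ℝ), ‖w'' z‖^2) with hc
  set d := Real.sqrt (∫ z in (1-δ)..(1:ℝ), ‖θ z‖^2) with hd
  set A := ∫ z in (0:ℝ)..1, ‖w'' z‖^2 with hA
  set B := ∫ z in (0:ℝ)..1, ‖θ z‖^2 with hB
  have ha0 : 0 ≤ a := Real.sqrt_nonneg _
  have hb0 : 0 ≤ b := Real.sqrt_nonneg _
  have hc0 : 0 ≤ c := Real.sqrt_nonneg _
  have hd0 : 0 ≤ d := Real.sqrt_nonneg _
  have hA0 : 0 ≤ A := intervalIntegral.integral_nonneg zero_le_one (fun x _ => sq_nonneg _)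
  have hB0 : 0 ≤ B := intervalIntegral.integral_nonneg zero_le_one (fun x _ => sq_nonneg _)
  -- splitting of integrals
  have split : ∀ f : ℝ → ℝ, ContinuousOn f (Set.Icc (0:ℝ) 1) → (∀ x, 0 ≤ f x) →
      (∫ z in (0:ℝ)..δ, f z) + (∫ z in (1-δ)..(1:ℝ), f z) ≤ ∫ z in (0:ℝ)..1, f z := by
    intro f hf hf0
    have hint : ∀ u v : ℝ, 0 ≤ u → u ≤ v → v ≤ 1 → IntervalIntegrable f volume u v := by
      intro u v hu huv hv1
      exact ((hf.mono (Set.Icc_subset_Icc hu hv1)).mono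
        (Set.uIcc_of_le huv).subset).intervalIntegrable
    have hδδ : δ ≤ 1 - δ := by linarith
    have hadj : (∫ z in (0:ℝ)..δ, f z) + (∫ z in δ..(1:ℝ), f z) = ∫ z in (0:ℝ)..1, f z :=
      intervalIntegral.integral_add_adjacent_intervals
        (hint 0 δ le_rfl hδ0.le hδ1) (hint δ 1 hδ0.le hδ1 le_rfl)
    have hmono : (∫ z in (1-δ)..(1:ℝ), f z) ≤ ∫ z in δ..(1:ℝ), f z :=
      intervalIntegral.integral_mono_interval hδδ (by linarith) le_rfl
        (Filter.Eventually.of_forall (fun x => hf0 x)) (hint δ 1 hδ0.le hδ1 le_rfl)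
    linarith
  have key1 : a^2 + c^2 ≤ A := by
    have := split (fun z => ‖w'' z‖^2) (hw''c.norm.pow 2) (fun x => sq_nonneg _)
    rw [ha, hc, Real.sq_sqrt (intervalIntegral.integral_nonneg hδ0.le (fun x _ => sq_nonneg _)),
      Real.sq_sqrt (intervalIntegral.integral_nonneg (by linarith) (fun x _ => sq_nonneg _))]
    exact this
  have key2 : b^2 + d^2 ≤ B := by
    have := split (fun z => ‖θ z‖^2) (hθc.norm.pow 2) (fun x => sq_nonneg _)
    rw [hb, hd, Real.sq_sqrt (intervalIntegral.integral_nonneg hδ0.le (fun x _ => sq_nonneg _)),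
      Real.sq_sqrt (intervalIntegral.integral_nonneg (by linarith) (fun x _ => sq_nonneg _))]
    exact this
  -- two-term Cauchy-Schwarz
  have hsum : a*b + c*d ≤ Real.sqrt A * Real.sqrt B := by
    have h1 : (a*b + c*d)^2 ≤ (a^2 + c^2) * (b^2 + d^2) := by
      nlinarith [sq_nonneg (a*d - c*b), mul_nonneg (mul_nonneg ha0 hb0) (mul_nonneg hc0 hd0)]
    have h2 : (a*b + c*d)^2 ≤ A * B := by
      refine h1.trans (mul_le_mul key1 key2 (by positivity) hA0)
    calc a*b + c*d ≤ |a*b + c*d| := le_abs_self _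
      _ = Real.sqrt ((a*b + c*d)^2) := (Real.sqrt_sq_eq_abs _).symm
      _ ≤ Real.sqrt (A * B) := Real.sqrt_le_sqrt h2
      _ = Real.sqrt A * Real.sqrt B := Real.sqrt_mul hA0 _
  set u := Real.sqrt A with hu
  set v := Real.sqrt B with hv
  have hu0 : 0 ≤ u := Real.sqrt_nonneg _
  have hv0 : 0 ≤ v := Real.sqrt_nonneg _
  have hAu : A = u^2 := (Real.sq_sqrt hA0).symm
  have hBv : B = v^2 := (Real.sq_sqrt hB0).symm
  -- Young's inequality term
  have st : 2*(u*v) ≤ (q/k^2)*A + (k^2/q)*B := by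
    have hqk : 0 < q/k^2 := by positivity
    have hik : k^2/q = (q/k^2)⁻¹ := by rw [inv_div]
    have hexp : (q/k^2)⁻¹ * ((q/k^2)*u - v)^2
        = (q/k^2)*u^2 - 2*(u*v) + (q/k^2)⁻¹ * v^2 := by
      field_simp; ring
    have hnn : 0 ≤ (q/k^2)⁻¹ * ((q/k^2)*u - v)^2 :=
      mul_nonneg (inv_nonneg.mpr hqk.le) (sq_nonneg _)
    rw [hAu, hBv, hik]; linarith [hexp ▸ hnn]
  -- nonnegativity of remaining terms
  have hP0 : 0 ≤ p * ∫ z in (0:ℝ)..1, ‖w' z‖^2 :=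
    mul_nonneg hp.le (intervalIntegral.integral_nonneg zero_le_one (fun x _ => sq_nonneg _))
  have hQ0 : 0 ≤ (1/p) * ∫ z in (0:ℝ)..1, ‖θ' z‖^2 :=
    mul_nonneg (by positivity) (intervalIntegral.integral_nonneg zero_le_one (fun x _ => sq_nonneg _))
  -- final arithmetic
  have hs2 : Real.sqrt 2 * Real.sqrt 2 = 2 := Real.mul_self_sqrt (by norm_num)
  have hs2pos : 0 < Real.sqrt 2 := Real.sqrt_pos.mpr (by norm_num)
  have ecoef : δ^2 / (4 * Real.sqrt 2) = δ^2 * Real.sqrt 2 / 8 := by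
    rw [div_eq_div_iff (by positivity) (by norm_num)]
    linear_combination (-4*δ^2) * (Real.sq_sqrt (by norm_num : (0:ℝ) ≤ 2))
  have hs43 : 4/3 ≤ Real.sqrt 2 := by
    rw [show (4:ℝ)/3 = Real.sqrt ((4/3)^2) from (Real.sqrt_sq (by norm_num)).symm]
    exact Real.sqrt_le_sqrt (by norm_num)
  have main : δ^2/3 * (u*v) ≤ δ^2 * Real.sqrt 2 / 8 * ((q/k^2)*A + (k^2/q)*B) := by
    have h1 : δ^2 * (4/3) * (u*v) ≤ δ^2 * Real.sqrt 2 * (u*v) :=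
      mul_le_mul_of_nonneg_right
        (mul_le_mul_of_nonneg_left hs43 (sq_nonneg δ)) (mul_nonneg hu0 hv0)
    have h2 : δ^2 * Real.sqrt 2 / 8 * (2*(u*v))
        ≤ δ^2 * Real.sqrt 2 / 8 * ((q/k^2)*A + (k^2/q)*B) :=
      mul_le_mul_of_nonneg_left st (by positivity)
    have e : δ^2 * Real.sqrt 2 / 8 * (2*(u*v)) = δ^2 * Real.sqrt 2 * (u*v) / 4 := by ring
    rw [e] at h2
    linarith
  have hLHS : (∫ z in (0:ℝ)..δ, ‖w z * starRingEnd ℂ (θ z)‖)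
      + (∫ z in (1-δ)..(1:ℝ), ‖w z * starRingEnd ℂ (θ z)‖) ≤ δ^2/3 * (u*v) := by
    have h1 : δ^2/3 * a * b + δ^2/3 * c * d ≤ δ^2/3 * (u*v) := by
      have := mul_le_mul_of_nonneg_left hsum (by positivity : (0:ℝ) ≤ δ^2/3)
      calc δ^2/3 * a * b + δ^2/3 * c * d = δ^2/3 * (a*b + c*d) := by ring
        _ ≤ δ^2/3 * (u*v) := this
    linarith [L1, L2]
  rw [ecoef]
  have hfinal : δ^2 * Real.sqrt 2 / 8 * ((q/k^2)*A + (k^2/q)*B)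
      ≤ δ^2 * Real.sqrt 2 / 8 *
        (p * (∫ z in (0:ℝ)..1, ‖w' z‖^2) + (1/p) * (∫ z in (0:ℝ)..1, ‖θ' z‖^2)
          + (q/k^2)*A + (k^2/q)*B) := by
    have hco : 0 ≤ δ^2 * Real.sqrt 2 / 8 := by positivity
    exact mul_le_mul_of_nonneg_left (by linarith) hco
  exact hLHS.trans (main.trans hfinal)
end

section
/- Let η ≥ 0 and R > 0 be real numbers satisfying R ≥ 32/3 if η ≤ 1/2, and R ≥ (128/3)·η/(1+2η) if η ≥ 1/2. Define δ_s and b_s as follows: if η ≤ 1/2 and (η = 0 or R < (8/3)η^(−2)), then δ_s = 2√(2/3)·R^(−1/2) and b_s = 3/2; if 0 < η ≤ 1/2 and R ≥ (8/3)η^(−2), then δ_s = 2(η/3)^(1/3)·R^(−1/3) and b_s = 1 + δ_s/(2η); if η ≥ 1/2, then δ_s = 2(2/3)^(1/3)·(η/(1+2η))^(1/3)·R^(−1/3) and b_s = 1 + (1+2η)·δ_s/(4η). Then for all real numbers N and Ra with N ≤ 3/(2δ_s) and Ra ≥ R·(b_s − 1)/2, one has N ≤ (3√6/4)·√Ra.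 -/
lemma aux_stmt14 (δs N Ra : ℝ) (hδ : 0 < δs) (hN : N ≤ 3/(2*δs))
    (hRa : 2/(3*δs^2) ≤ Ra) : N ≤ 3 * Real.sqrt 6 / 4 * Real.sqrt Ra := by
  have h6 : (0:ℝ) < Real.sqrt 6 := Real.sqrt_pos.mpr (by norm_num)
  have h6sq : (Real.sqrt 6)^2 = 6 := Real.sq_sqrt (by norm_num)
  have hs : 2/(Real.sqrt 6 * δs) ≤ Real.sqrt Ra := by
    rw [show (2/(Real.sqrt 6*δs)) = Real.sqrt ((2/(Real.sqrt 6*δs))^2) from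
      (Real.sqrt_sq (by positivity)).symm]
    apply Real.sqrt_le_sqrt
    have h1 : (2/(Real.sqrt 6*δs))^2 = 2/(3*δs^2) := by
      rw [div_pow, mul_pow, h6sq]; ring
    linarith
  have key : 3 * Real.sqrt 6 / 4 * (2/(Real.sqrt 6 * δs)) = 3/(2*δs) := by
    field_simp
    ring
  calc N ≤ 3/(2*δs) := hN
    _ = 3 * Real.sqrt 6 / 4 * (2/(Real.sqrt 6 * δs)) := key.symm
    _ ≤ 3 * Real.sqrt 6 / 4 * Real.sqrt Ra := by
        apply mul_le_mul_of_nonneg_left hs (by positivity)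

/-- Algebraic content of Theorem 3: with δ_s, b_s chosen piecewise in the three
regimes, any N ≤ 3/(2δ_s) and Ra ≥ R(b_s−1)/2 satisfy N ≤ (3√6/4)√Ra. -/
theorem stmt_14 (η R N Ra δs bs : ℝ) (hη0 : 0 ≤ η) (hR : 0 < R)
    (hR1 : η ≤ 1/2 → 32/3 ≤ R)
    (hR2 : 1/2 ≤ η → 128/3 * η/(1 + 2*η) ≤ R)
    (hcase1 : η ≤ 1/2 → (η = 0 ∨ R < 8/(3*η^2)) →
      δs = 2 * Real.sqrt (2/3) * R ^ (-(1:ℝ)/2) ∧ bs = 3/2)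
    (hcase2 : 0 < η → η ≤ 1/2 → 8/(3*η^2) ≤ R →
      δs = 2 * (η/3) ^ ((1:ℝ)/3) * R ^ (-(1:ℝ)/3) ∧ bs = 1 + δs/(2*η))
    (hcase3 : 1/2 ≤ η →
      δs = 2 * (2/3 : ℝ) ^ ((1:ℝ)/3) * (η/(1 + 2*η)) ^ ((1:ℝ)/3) * R ^ (-(1:ℝ)/3) ∧
      bs = 1 + (1 + 2*η) * δs / (4*η))
    (hN : N ≤ 3/(2*δs)) (hRa : R * (bs - 1)/2 ≤ Ra) :
    N ≤ 3 * Real.sqrt 6 / 4 * Real.sqrt Ra := by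
  have hRne : R ≠ 0 := ne_of_gt hR
  have hcubeR : (R ^ (-(1:ℝ)/3))^3 = R⁻¹ := by
    rw [← Real.rpow_natCast (R ^ (-(1:ℝ)/3)) 3, ← Real.rpow_mul hR.le]
    norm_num
    exact Real.rpow_neg_one R
  by_cases hη : η ≤ 1/2
  · by_cases hA : η = 0 ∨ R < 8/(3*η^2)
    · -- Case 1
      obtain ⟨hδ, hb⟩ := hcase1 hη hA
      have hδpos : 0 < δs := by
        rw [hδ]
        have := Real.rpow_pos_of_pos hR (-(1:ℝ)/2)
        have : (0:ℝ) < Real.sqrt (2/3) := Real.sqrt_pos.mpr (by norm_num)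
        positivity
      have hδ2 : δs^2 = 8/3 * R⁻¹ := by
        rw [hδ, mul_pow, mul_pow, Real.sq_sqrt (by norm_num : (0:ℝ) ≤ 2/3),
          ← Real.rpow_natCast (R ^ (-(1:ℝ)/2)) 2, ← Real.rpow_mul hR.le]
        norm_num
        exact Real.rpow_neg_one R
      apply aux_stmt14 δs N Ra hδpos hN
      have h1 : 2/(3*δs^2) = R/4 := by
        rw [hδ2]; field_simp; ring
      rw [h1]
      rw [hb] at hRa
      linarith
    · -- Case 2
      push_neg at hA
      obtain ⟨hηne, hRge⟩ := hA
      have hηpos : 0 < η := lt_of_le_of_ne hη0 (Ne.symm hηne)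
      obtain ⟨hδ, hb⟩ := hcase2 hηpos hη hRge
      have hδpos : 0 < δs := by
        rw [hδ]
        have := Real.rpow_pos_of_pos hR (-(1:ℝ)/3)
        have := Real.rpow_pos_of_pos (show (0:ℝ) < η/3 by linarith) ((1:ℝ)/3)
        positivity
      have hδ3 : δs^3 = 8 * (η/3) * R⁻¹ := by
        rw [hδ, mul_pow, mul_pow, hcubeR,
          ← Real.rpow_natCast ((η/3) ^ ((1:ℝ)/3)) 3,
          ← Real.rpow_mul (by positivity)]
        norm_num
      apply aux_stmt14 δs N Ra hδpos hN
      rw [hb] at hRa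
      have heq : 2/(3*δs^2) = R * (1 + δs/(2*η) - 1)/2 := by
        have h3 : 3 * R * δs^3 = 8 * η := by
          rw [hδ3]; field_simp
        field_simp
        linear_combination -h3
      rw [heq]; exact hRa
  · -- Case 3
    have hη' : 1/2 ≤ η := le_of_lt (lt_of_not_ge hη)
    have hηpos : 0 < η := by linarith
    have h12 : (0:ℝ) < 1 + 2*η := by linarith
    obtain ⟨hδ, hb⟩ := hcase3 hη'
    have hδpos : 0 < δs := by
      rw [hδ]
      have := Real.rpow_pos_of_pos hR (-(1:ℝ)/3)
      have := Real.rpow_pos_of_pos (show (0:ℝ) < (2:ℝ)/3 by norm_num) ((1:ℝ)/3)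
      have := Real.rpow_pos_of_pos (show (0:ℝ) < η/(1+2*η) by positivity) ((1:ℝ)/3)
      positivity
    have hδ3 : δs^3 = 8 * (2/3) * (η/(1+2*η)) * R⁻¹ := by
      rw [hδ, mul_pow, mul_pow, mul_pow, hcubeR,
        ← Real.rpow_natCast (((2:ℝ)/3) ^ ((1:ℝ)/3)) 3,
        ← Real.rpow_mul (by norm_num : (0:ℝ) ≤ 2/3),
        ← Real.rpow_natCast ((η/(1+2*η)) ^ ((1:ℝ)/3)) 3,
        ← Real.rpow_mul (by positivity)]
      norm_num
    apply aux_stmt14 δs N Ra hδpos hN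
    rw [hb] at hRa
    have heq : 2/(3*δs^2) = R * (1 + (1 + 2*η) * δs / (4*η) - 1)/2 := by
      have h3 : 3 * R * (1+2*η) * δs^3 = 16 * η := by
        rw [hδ3]; field_simp; ring
      field_simp
      nlinarith [sq_nonneg δs, hδpos]
    rw [heq]; exact hRa
end
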